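/- arXiv:2602.20606 — 4 statements merged into one kernel-verified Lean document; each statement's English description precedes it below -/
import Mathlib

section
/- Let W : ℕ → (0,∞) be a strictly increasing function with lim_{N→∞} W(N) = ∞, such that ΔW is decreasing with lim_{N→∞} ΔW(N) = 0 and lim_{N→∞} N·ΔW(N) = ∞. Let (x_n)_{n∈ℕ} be a bounded sequence in a Banach space Y and let L ∈ Y. If the uniform W-weighted average of (x_n) equals L, i.e. 𝔼^W_unif x_n = L, then the Cesàro averages converge to L: lim_{N→∞} (1/N) Σ_{n=1}^N x_n = L. -/
open Filter Finset MeasureTheory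

/-- Discrete derivative: `Δg(n) = g(n) - g(n-1)` for `n ≥ 2`, and `Δg(1) = g(1)`. -/
noncomputable def dd (g : ℕ → ℝ) (n : ℕ) : ℝ := if n = 1 then g 1 else g n - g (n - 1)

/-- Iterated discrete derivative `Δ^k`. -/
noncomputable def ddIter (f : ℕ → ℝ) : ℕ → ℕ → ℝ
  | 0 => f
  | k + 1 => dd (ddIter f k)

/-- `N`-th `W`-weighted average `𝔼^W_{n ≤ N} x_n`. -/
noncomputable def wavg {Y : Type*} [AddCommGroup Y] [Module ℝ Y]
    (W : ℕ → ℝ) (x : ℕ → Y) (N : ℕ) : Y :=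
  (W N)⁻¹ • ∑ n ∈ Finset.Icc 1 N, dd W n • x n

/-- `W`-weighted average over the interval `[M, N]`. -/
noncomputable def wavgI {Y : Type*} [AddCommGroup Y] [Module ℝ Y]
    (W : ℕ → ℝ) (x : ℕ → Y) (M N : ℕ) : Y :=
  (W N - W M)⁻¹ • ∑ n ∈ Finset.Icc M N, dd W n • x n

/-- Cesàro average over the interval `[M, N]`. -/
noncomputable def cesaroI {Y : Type*} [AddCommGroup Y] [Module ℝ Y]
    (x : ℕ → Y) (M N : ℕ) : Y :=
  ((N : ℝ) - (M : ℝ))⁻¹ • ∑ n ∈ Finset.Icc M N, x n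

/-- Iterated `W`-weighted averages: `iterAvg W x k N = 𝔼(k)^W_{n ≤ N} x_n`,
with the convention `iterAvg W x 0 = x`. -/
noncomputable def iterAvg {Y : Type*} [AddCommGroup Y] [Module ℝ Y]
    (W : ℕ → ℝ) (x : ℕ → Y) : ℕ → ℕ → Y
  | 0, N => x N
  | k + 1, N => (W N)⁻¹ • ∑ n ∈ Finset.Icc 1 N, dd W n • iterAvg W x k n

/-- The uniform `W`-weighted average of `x` equals `L`: `𝔼^W_unif x_n = L`. -/
def unifAvg {Y : Type*} [NormedAddCommGroup Y] [NormedSpace ℝ Y]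
    (W : ℕ → ℝ) (x : ℕ → Y) (L : Y) : Prop :=
  ∀ ε > (0 : ℝ), ∃ K > (0 : ℝ), ∀ M N : ℕ, 1 ≤ M → M ≤ N → K ≤ W N - W M →
    ‖wavgI W x M N - L‖ < ε

/-- `𝔼(∞)^W x_n = L`: `lim_{k → ∞} limsup_{N → ∞} ‖𝔼(k)^W_{n ≤ N}(x_n - L)‖ = 0`. -/
def iterInfty {Y : Type*} [NormedAddCommGroup Y] [NormedSpace ℝ Y]
    (W : ℕ → ℝ) (x : ℕ → Y) (L : Y) : Prop :=
  Tendsto (fun k => Filter.limsup (fun N => ‖iterAvg W (fun n => x n - L) (k + 1) N‖) atTop)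
    atTop (nhds 0)

/-- Membership in the class `𝓕₁`. -/
def inF1 (f : ℕ → ℝ) : Prop :=
  Tendsto f atTop atTop ∧ Tendsto (fun n => dd f n) atTop (nhds 0) ∧
    ∃ n₀ : ℕ, ∀ m n : ℕ, n₀ ≤ m → m ≤ n → dd f n ≤ dd f m

/-- `memF ℓ f` means `f ∈ 𝓕_{ℓ+1}`. -/
def memF : ℕ → (ℕ → ℝ) → Prop
  | 0, f => inF1 f
  | ℓ + 1, f => memF ℓ (dd f)

/-- Integer powers `T^m` of an invertible map `T` with inverse `e`. -/
def zpowIter {X : Type*} (T e : X → X) (m : ℤ) : X → X :=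
  if 0 ≤ m then T^[m.toNat] else e^[(-m).toNat]

/-- `p(Δ)f(n)` for an integer polynomial `p`. -/
noncomputable def polyDD (p : Polynomial ℤ) (f : ℕ → ℝ) (n : ℕ) : ℝ :=
  ∑ j ∈ Finset.range (p.natDegree + 1), (p.coeff j : ℝ) * ddIter f j n

/-- `E ⊆ ℕ = {1, 2, ...}` has positive upper Banach density. -/
def posUBD (E : Set ℕ) : Prop :=
  ∃ δ : ℝ, 0 < δ ∧ ∃ M N : ℕ → ℕ, (∀ j, 1 ≤ M j ∧ M j ≤ N j) ∧
    Tendsto (fun j => N j - M j) atTop atTop ∧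
    ∀ j, δ * ((N j : ℝ) - (M j : ℝ)) ≤ (Nat.card ↥(E ∩ Set.Icc (M j) (N j)) : ℝ)


private lemma myTele (W : ℕ → ℝ) {a b : ℕ} (ha : 1 ≤ a) (hab : a ≤ b) :
    ∑ n ∈ Finset.Ioc a b, dd W n = W b - W a := by
  induction b, hab using Nat.le_induction with
  | base => simp
  | succ b hb ih =>
      rw [Finset.sum_Ioc_succ_top hb, ih, dd, if_neg (by omega)]
      simp

private lemma mySumTop {Y : Type*} [AddCommMonoid Y] (F : ℕ → Y) {M N : ℕ}
    (h1 : 1 ≤ N) (h : M ≤ N) :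
    ∑ n ∈ Finset.Icc M N, F n = ∑ n ∈ Finset.Icc M (N - 1), F n + F N := by
  obtain ⟨N', rfl⟩ : ∃ N', N = N' + 1 := ⟨N - 1, by omega⟩
  simp [Finset.sum_Icc_succ_top (by omega : M ≤ N' + 1)]

private lemma myTele2 (g : ℕ → ℝ) {M N : ℕ} (hM : 1 ≤ M) (h : M ≤ N) :
    ∑ n ∈ Finset.Icc M (N - 1), (g (n + 1) - g n) = g N - g M := by
  induction N, h using Nat.le_induction with
  | base =>
      have : Finset.Icc M (M - 1) = ∅ := by apply Finset.Icc_eq_empty; omega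
      simp [this]
  | succ N hN ih =>
      simp only [Nat.add_sub_cancel]
      rw [mySumTop (fun n => g (n + 1) - g n) (by omega) hN, ih]
      ring

private lemma myAbel {Y : Type*} [AddCommGroup Y] [Module ℝ Y] (c : ℕ → ℝ) (v : ℕ → Y)
    {M N : ℕ} (hM : 1 ≤ M) (h : M ≤ N) :
    ∑ n ∈ Finset.Icc M N, c n • v n
      = c N • (∑ n ∈ Finset.Icc M N, v n)
        - ∑ n ∈ Finset.Icc M (N - 1), (c (n + 1) - c n) • (∑ k ∈ Finset.Icc M n, v k) := by
  induction N, h using Nat.le_induction with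
  | base =>
      have : Finset.Icc M (M - 1) = ∅ := by apply Finset.Icc_eq_empty; omega
      simp [this]
  | succ N hN ih =>
      simp only [Nat.add_sub_cancel]
      rw [mySumTop (fun n => c n • v n) (by omega) (by omega : M ≤ N + 1),
        mySumTop v (by omega) (by omega : M ≤ N + 1),
        mySumTop (fun n => (c (n + 1) - c n) • ∑ k ∈ Finset.Icc M n, v k) (by omega) hN]
      simp only [Nat.add_sub_cancel]
      rw [ih, smul_add, sub_smul]
      abel

set_option maxHeartbeats 3200000
/-- if the uniform `W`-weighted average of a bounded sequence in a Banach
space equals `L`, then the Cesàro averages converge to `L`. -/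
theorem stmt0 {Y : Type*} [NormedAddCommGroup Y] [NormedSpace ℝ Y] [CompleteSpace Y]
    (W : ℕ → ℝ)
    (hWpos : ∀ n : ℕ, 1 ≤ n → 0 < W n)
    (hWmono : ∀ m n : ℕ, 1 ≤ m → m < n → W m < W n)
    (hWtop : Tendsto W atTop atTop)
    (hWdec : ∀ m n : ℕ, 1 ≤ m → m ≤ n → dd W n ≤ dd W m)
    (hW0 : Tendsto (fun n : ℕ => dd W n) atTop (nhds 0))
    (hWN : Tendsto (fun n : ℕ => (n : ℝ) * dd W n) atTop atTop)
    (x : ℕ → Y) (hx : ∃ C : ℝ, ∀ n, ‖x n‖ ≤ C) (L : Y)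
    (h : unifAvg W x L) :
    Tendsto (fun N : ℕ => (N : ℝ)⁻¹ • ∑ n ∈ Finset.Icc 1 N, x n) atTop (nhds L) := by
  classical
  obtain ⟨C, hC⟩ := hx
  set y : ℕ → Y := fun n => x n - L with hy
  have hyn : ∀ n, y n = x n - L := fun n => rfl
  set C' : ℝ := (max C 0) + ‖L‖ with hC'def
  have hC'0 : 0 ≤ C' := by positivity
  have hC'y : ∀ n, ‖y n‖ ≤ C' := by
    intro n
    have h1 := norm_sub_le (x n) L
    have h2 := hC n
    have h3 : C ≤ max C 0 := le_max_left _ _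
    rw [hyn]
    calc ‖x n - L‖ ≤ ‖x n‖ + ‖L‖ := h1
      _ ≤ C' := by rw [hC'def]; gcongr; linarith
  have hddpos : ∀ n : ℕ, 1 ≤ n → 0 < dd W n := by
    intro n hn
    by_cases h1 : n = 1
    · subst h1; simpa [dd] using hWpos 1 le_rfl
    · rw [dd, if_neg h1]
      have := hWmono (n - 1) n (by omega) (by omega)
      linarith
  have hWle : ∀ m n : ℕ, 1 ≤ m → m ≤ n → W m ≤ W n := by
    intro m n h1 h2
    rcases eq_or_lt_of_le h2 with hh | hh
    · rw [hh]
    · exact (hWmono m n h1 hh).le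
  set c : ℕ → ℝ := fun n => (dd W n)⁻¹ with hcdef
  have hcn : ∀ n, c n = (dd W n)⁻¹ := fun n => rfl
  have hcpos : ∀ n : ℕ, 1 ≤ n → 0 < c n := fun n hn => by
    rw [hcn]; exact inv_pos.mpr (hddpos n hn)
  have hcmono : ∀ m n : ℕ, 1 ≤ m → m ≤ n → c m ≤ c n := by
    intro m n h1 h2
    rw [hcn, hcn]
    exact inv_anti₀ (hddpos n (le_trans h1 h2)) (hWdec m n h1 h2)
  have hcN : Tendsto (fun N : ℕ => c (N + 1) / (N : ℝ)) atTop (nhds 0) := by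
    have h1 : Tendsto (fun n : ℕ => ((n : ℝ) * dd W n)⁻¹) atTop (nhds 0) :=
      tendsto_inv_atTop_zero.comp hWN
    have h2 : Tendsto (fun N : ℕ => (((N + 1 : ℕ) : ℝ) * dd W (N + 1))⁻¹) atTop (nhds 0) :=
      h1.comp (tendsto_add_atTop_nat 1)
    have h3 : Tendsto (fun N : ℕ => 2 * (((N + 1 : ℕ) : ℝ) * dd W (N + 1))⁻¹) atTop (nhds 0) := by
      simpa using h2.const_mul 2
    apply squeeze_zero' ?_ ?_ h3
    · filter_upwards [eventually_ge_atTop 1] with N hN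
      exact div_nonneg (hcpos (N + 1) (by omega)).le (Nat.cast_nonneg N)
    · filter_upwards [eventually_ge_atTop 1] with N hN
      have hN0 : (0 : ℝ) < N := by exact_mod_cast hN
      have hd := hddpos (N + 1) (by omega)
      have key : ((N : ℝ))⁻¹ ≤ 2 * (((N + 1 : ℕ) : ℝ))⁻¹ := by
        have hN1 : (0 : ℝ) < ((N + 1 : ℕ) : ℝ) := by positivity
        rw [inv_eq_one_div, inv_eq_one_div, mul_one_div, div_le_div_iff₀ hN0 hN1]
        have hNr : (1 : ℝ) ≤ (N : ℝ) := by exact_mod_cast hN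
        push_cast
        linarith
      rw [hcn]
      calc (dd W (N + 1))⁻¹ / (N : ℝ) = (dd W (N + 1))⁻¹ * ((N : ℝ))⁻¹ := div_eq_mul_inv _ _
        _ ≤ (dd W (N + 1))⁻¹ * (2 * (((N + 1 : ℕ) : ℝ))⁻¹) :=
            mul_le_mul_of_nonneg_left key (inv_pos.mpr hd).le
        _ = 2 * (((N + 1 : ℕ) : ℝ) * dd W (N + 1))⁻¹ := by rw [mul_inv]; ring
  -- main part: averages of y tend to 0
  have key : Tendsto (fun N : ℕ => (N : ℝ)⁻¹ • ∑ n ∈ Finset.Icc 1 N, y n) atTop (nhds 0) := by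
    rw [NormedAddCommGroup.tendsto_nhds_zero]
    intro ε₀ hε₀
    have h3L : (0 : ℝ) < 3 + ‖L‖ := by positivity
    set ε : ℝ := min 1 (ε₀ / (2 * (3 + ‖L‖))) with hεdef
    have hε : 0 < ε := lt_min one_pos (div_pos hε₀ (by positivity))
    have hε1 : ε ≤ 1 := min_le_left _ _
    have hεε₀ : (3 + ‖L‖) * ε / 2 ≤ ε₀ / 4 := by
      have hεle : ε ≤ ε₀ / (2 * (3 + ‖L‖)) := min_le_right _ _
      rw [le_div_iff₀ (by positivity)] at hεle
      linarith
    obtain ⟨K, hK, hKs⟩ := h ε hε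
    have hεK : ε * K ≤ K := by nlinarith
    -- choose n₀
    obtain ⟨n₁, hn₁⟩ := eventually_atTop.mp (hW0.eventually_lt_const (show (0:ℝ) < ε * K by positivity))
    set n₀ : ℕ := max n₁ 2 with hn₀def
    have hn₀2 : 2 ≤ n₀ := le_max_right _ _
    have hdds : ∀ n, n₀ ≤ n → dd W n ≤ ε * K := fun n hn =>
      (hn₁ n (le_trans (le_max_left _ _) hn)).le
    -- greedy blocks
    have hex : ∀ aa : ℕ, ∃ m, aa < m ∧ 2 * K ≤ W m - W aa := by
      intro aa
      have h1 : ∀ᶠ m : ℕ in atTop, W aa + 2 * K ≤ W m := hWtop.eventually_ge_atTop _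
      have h2 : ∀ᶠ m : ℕ in atTop, aa < m := eventually_gt_atTop aa
      obtain ⟨m, hm1, hm2⟩ := (h2.and h1).exists
      exact ⟨m, hm1, by linarith⟩
    obtain ⟨f, hfspec, hfmin⟩ : ∃ f : ℕ → ℕ, (∀ p, p < f p ∧ 2 * K ≤ W (f p) - W p) ∧
        (∀ p m, p < m → m < f p → W m - W p < 2 * K) := by
      refine ⟨fun p => Nat.find (hex p), fun p => Nat.find_spec (hex p), fun p m h1 h2 => ?_⟩
      have h3 := Nat.find_min (hex p) h2
      push_neg at h3
      exact h3 h1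
    obtain ⟨a, ha0, haS⟩ : ∃ a : ℕ → ℕ, a 0 = n₀ ∧ ∀ i, a (i + 1) = f (a i) :=
      ⟨fun i => f^[i] n₀, rfl, fun i => Function.iterate_succ_apply' f i n₀⟩
    have hlt : ∀ i, a i < a (i + 1) := fun i => (haS i) ▸ (hfspec (a i)).1
    have hmass : ∀ i, 2 * K ≤ W (a (i + 1)) - W (a i) := fun i => (haS i) ▸ (hfspec (a i)).2
    have hmin : ∀ i m, a i < m → m < a (i + 1) → W m - W (a i) < 2 * K := by
      intro i m h1 h2
      exact hfmin (a i) m h1 ((haS i) ▸ h2)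
    have han₀ : ∀ i, n₀ ≤ a i := by
      intro i
      induction i with
      | zero => exact le_of_eq ha0.symm
      | succ i ih => exact le_trans ih (hlt i).le
    have ha1 : ∀ i, 1 ≤ a i := fun i => le_trans (by omega) (han₀ i)
    have hamono : ∀ i j, i ≤ j → a i ≤ a j :=
      fun i j hij => (strictMono_nat_of_lt_succ hlt).monotone hij
    have hgrow : ∀ i, n₀ + i ≤ a i := by
      intro i
      induction i with
      | zero => omega
      | succ i ih => have := hlt i; omega
    have hmass_up : ∀ i, W (a (i + 1)) - W (a i) ≤ 2 * K + dd W (a (i + 1)) := by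
      intro i
      have h2 : 2 ≤ a (i + 1) := by have := han₀ (i + 1); omega
      have hdd : dd W (a (i + 1)) = W (a (i + 1)) - W (a (i + 1) - 1) := by
        rw [dd, if_neg (by omega)]
      rcases eq_or_lt_of_le (Nat.succ_le_of_lt (hlt i)) with heq | hlt2
      · have he : a (i + 1) - 1 = a i := by omega
        rw [he] at hdd
        nlinarith
      · have h3 := hmin i (a (i + 1) - 1) (by omega) (by omega)
        linarith
    have hlen : ∀ i, 2 * K * c (a i + 1) ≤ (a (i + 1) : ℝ) - (a i : ℝ) := by
      intro i
      have h1 : W (a (i + 1)) - W (a i) = ∑ n ∈ Finset.Ioc (a i) (a (i + 1)), dd W n :=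
        (myTele W (ha1 i) (hlt i).le).symm
      have h2 : ∑ n ∈ Finset.Ioc (a i) (a (i + 1)), dd W n
          ≤ ((a (i + 1) - a i : ℕ) : ℝ) * dd W (a i + 1) := by
        calc ∑ n ∈ Finset.Ioc (a i) (a (i + 1)), dd W n
            ≤ ∑ n ∈ Finset.Ioc (a i) (a (i + 1)), dd W (a i + 1) :=
              Finset.sum_le_sum fun n hn =>
                hWdec (a i + 1) n (by have := ha1 i; omega) (Finset.mem_Ioc.mp hn).1
          _ = _ := by rw [Finset.sum_const, Nat.card_Ioc, nsmul_eq_mul]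
      have hd := hddpos (a i + 1) (by have := ha1 i; omega)
      have h3 : 2 * K ≤ ((a (i + 1) - a i : ℕ) : ℝ) * dd W (a i + 1) := by
        have := hmass i; linarith
      have h4 : ((a (i + 1) - a i : ℕ) : ℝ) = (a (i + 1) : ℝ) - (a i : ℝ) :=
        Nat.cast_sub (hlt i).le
      rw [hcn, ← h4, ← div_eq_mul_inv, div_le_iff₀ hd]
      linarith
    set D : ℝ := 3 + ‖L‖ + 2 * C' with hDdef
    have hD0 : 0 ≤ D := by rw [hDdef]; positivity
    -- the block estimate
    have hblock : ∀ i : ℕ, ‖∑ n ∈ Finset.Ioc (a i) (a (i + 1)), y n‖ ≤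
        (3 + ‖L‖) * (ε * K) * c (a (i + 1)) + D * K * (c (a (i + 1)) - c (a i + 1)) := by
      intro i
      set M : ℕ := a i + 1 with hMdef
      set N' : ℕ := a (i + 1) with hN'def
      have hMN' : M ≤ N' := hlt i
      have hM1 : 1 ≤ M := by omega
      have hMn₀ : n₀ ≤ a i := han₀ i
      have hN'2 : 2 ≤ N' := by have := han₀ (i + 1); omega
      have hddM : dd W M = W M - W (a i) := by
        rw [dd, if_neg (by omega)]
        have he : M - 1 = a i := by omega
        rw [he]
      have hddMnn := hddpos M hM1
      have hddMs : dd W M ≤ ε * K := hdds M (by omega)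
      have hsum_dd : ∀ m, M ≤ m → ∑ n ∈ Finset.Icc M m, dd W n = W m - W (a i) := by
        intro m hm
        rw [hMdef, Finset.Icc_add_one_left_eq_Ioc]
        exact myTele W (by have := ha1 i; omega) (by omega)
      have hTx : ∀ m, ∑ n ∈ Finset.Icc M m, dd W n • y n
          = (∑ n ∈ Finset.Icc M m, dd W n • x n) - (∑ n ∈ Finset.Icc M m, dd W n) • L := by
        intro m
        rw [Finset.sum_smul, ← Finset.sum_sub_distrib]
        exact Finset.sum_congr rfl fun n _ => by rw [hyn, smul_sub]
      have hmassupI := hmass_up i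
      have hddN' : dd W N' ≤ ε * K := hdds N' (by have := han₀ (i + 1); omega)
      have hKM : K ≤ W N' - W M := by
        have := hmass i
        linarith [hddM ▸ hddMs]
      have hWub : ∀ m, M ≤ m → m ≤ N' → W m - W M ≤ 3 * K := by
        intro m hm1 hm2
        have h1 : W m ≤ W N' := hWle m N' (by omega) hm2
        linarith [hddM ▸ hddMnn]
      have hT_big : ∀ m, M ≤ m → K ≤ W m - W M →
          ‖∑ n ∈ Finset.Icc M m, dd W n • y n‖ ≤ ε * (W m - W M) + ε * K * ‖L‖ := by
        intro m hm hKm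
        have hpos : (0 : ℝ) < W m - W M := lt_of_lt_of_le hK hKm
        have hws := hKs M m hM1 hm hKm
        rw [wavgI] at hws
        have e2 : ‖(∑ n ∈ Finset.Icc M m, dd W n • x n) - (W m - W M) • L‖
            ≤ ε * (W m - W M) := by
          have e1 : (∑ n ∈ Finset.Icc M m, dd W n • x n) - (W m - W M) • L
              = (W m - W M) • ((W m - W M)⁻¹ • (∑ n ∈ Finset.Icc M m, dd W n • x n) - L) := by
            rw [smul_sub, smul_smul, mul_inv_cancel₀ hpos.ne', one_smul]
          rw [e1, norm_smul, Real.norm_eq_abs, abs_of_pos hpos, mul_comm (W m - W M)]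
          exact mul_le_mul_of_nonneg_right hws.le hpos.le
        rw [hTx m, hsum_dd m hm]
        have e3 : (W m - W (a i)) • L = (W m - W M) • L + dd W M • L := by
          rw [← add_smul]
          congr 1
          rw [hddM]; ring
        calc ‖(∑ n ∈ Finset.Icc M m, dd W n • x n) - (W m - W (a i)) • L‖
            = ‖((∑ n ∈ Finset.Icc M m, dd W n • x n) - (W m - W M) • L) - dd W M • L‖ := by
              rw [e3]; congr 1; abel
          _ ≤ ‖(∑ n ∈ Finset.Icc M m, dd W n • x n) - (W m - W M) • L‖ + ‖dd W M • L‖ :=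
              norm_sub_le _ _
          _ ≤ ε * (W m - W M) + ε * K * ‖L‖ := by
              have e4 : ‖dd W M • L‖ = dd W M * ‖L‖ := by
                rw [norm_smul, Real.norm_eq_abs, abs_of_pos hddMnn]
              rw [e4]
              have := mul_le_mul_of_nonneg_right hddMs (norm_nonneg L)
              linarith
      have hT_all : ∀ m, M ≤ m → m ≤ N' →
          ‖∑ n ∈ Finset.Icc M m, dd W n • y n‖ ≤ D * K := by
        intro m hm hm2
        rcases le_or_gt K (W m - W M) with hc | hc
        · have h1 := hT_big m hm hc
          have h2 := hWub m hm hm2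
          have h3 : ε * (W m - W M) ≤ 3 * K := by nlinarith
          have h4 : ε * K * ‖L‖ ≤ K * ‖L‖ := mul_le_mul_of_nonneg_right hεK (norm_nonneg L)
          rw [hDdef]
          nlinarith [norm_nonneg L, mul_nonneg hC'0 hK.le]
        · have h1 : ‖∑ n ∈ Finset.Icc M m, dd W n • y n‖
              ≤ ∑ n ∈ Finset.Icc M m, dd W n * C' := by
            refine le_trans (norm_sum_le _ _) (Finset.sum_le_sum fun n hn => ?_)
            have hn1 : M ≤ n := (Finset.mem_Icc.mp hn).1
            rw [norm_smul, Real.norm_eq_abs, abs_of_pos (hddpos n (by omega))]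
            exact mul_le_mul_of_nonneg_left (hC'y n) (hddpos n (by omega)).le
          have h2 : ∑ n ∈ Finset.Icc M m, dd W n * C' = (W m - W (a i)) * C' := by
            rw [← Finset.sum_mul, hsum_dd m hm]
          have h3 : W m - W (a i) ≤ 2 * K := by
            have he : W m - W (a i) = (W m - W M) + dd W M := by rw [hddM]; ring
            linarith
          have h5 : 0 ≤ W m - W (a i) := by
            have h6 : W M - W (a i) = dd W M := hddM.symm
            have h7 := hWle M m hM1 hm
            linarith [hddMnn]
          rw [hDdef]
          nlinarith [norm_nonneg L, mul_nonneg hC'0 hK.le, hK.le]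
      -- Abel summation
      have hy_eq : ∀ n ∈ Finset.Icc M N', y n = c n • (dd W n • y n) := by
        intro n hn
        have hn1 : M ≤ n := (Finset.mem_Icc.mp hn).1
        rw [hcn, smul_smul, inv_mul_cancel₀ (hddpos n (by omega)).ne', one_smul]
      have habel := myAbel c (fun n => dd W n • y n) hM1 hMN'
      have hIoc : ∑ n ∈ Finset.Ioc (a i) N', y n = ∑ n ∈ Finset.Icc M N', c n • (dd W n • y n) := by
        rw [hMdef, Finset.Icc_add_one_left_eq_Ioc]
        exact Finset.sum_congr rfl fun n hn => hy_eq n (by rwa [hMdef, Finset.Icc_add_one_left_eq_Ioc])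
      rw [hIoc, habel]
      have hTN'2 : ‖∑ n ∈ Finset.Icc M N', dd W n • y n‖ ≤ (3 + ‖L‖) * (ε * K) := by
        have h1 := hT_big N' hMN' hKM
        have h2 := hWub N' hMN' le_rfl
        have h3 : ε * (W N' - W M) ≤ ε * (3 * K) :=
          mul_le_mul_of_nonneg_left h2 hε.le
        nlinarith
      have p1 : ‖c N' • ∑ n ∈ Finset.Icc M N', dd W n • y n‖
          ≤ c N' * ((3 + ‖L‖) * (ε * K)) := by
        rw [norm_smul, Real.norm_eq_abs, abs_of_pos (hcpos N' (by omega))]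
        exact mul_le_mul_of_nonneg_left hTN'2 (hcpos N' (by omega)).le
      have p2 : ‖∑ n ∈ Finset.Icc M (N' - 1),
            (c (n + 1) - c n) • (∑ k ∈ Finset.Icc M n, dd W k • y k)‖
          ≤ (c N' - c M) * (D * K) := by
        refine le_trans (norm_sum_le _ _) ?_
        have p3 : ∀ n ∈ Finset.Icc M (N' - 1),
            ‖(c (n + 1) - c n) • (∑ k ∈ Finset.Icc M n, dd W k • y k)‖
              ≤ (c (n + 1) - c n) * (D * K) := by
          intro n hn
          obtain ⟨hn1, hn2⟩ := Finset.mem_Icc.mp hn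
          have hmono := hcmono n (n + 1) (by omega) (by omega)
          rw [norm_smul, Real.norm_eq_abs, abs_of_nonneg (sub_nonneg.mpr hmono)]
          exact mul_le_mul_of_nonneg_left (hT_all n hn1 (by omega)) (sub_nonneg.mpr hmono)
        refine le_trans (Finset.sum_le_sum p3) ?_
        rw [← Finset.sum_mul, myTele2 c hM1 hMN']
      calc ‖c N' • (∑ n ∈ Finset.Icc M N', dd W n • y n)
            - ∑ n ∈ Finset.Icc M (N' - 1),
              (c (n + 1) - c n) • (∑ k ∈ Finset.Icc M n, dd W k • y k)‖
          ≤ ‖c N' • ∑ n ∈ Finset.Icc M N', dd W n • y n‖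
            + ‖∑ n ∈ Finset.Icc M (N' - 1),
              (c (n + 1) - c n) • (∑ k ∈ Finset.Icc M n, dd W k • y k)‖ := norm_sub_le _ _
        _ ≤ c N' * ((3 + ‖L‖) * (ε * K)) + (c N' - c M) * (D * K) := add_le_add p1 p2
        _ = (3 + ‖L‖) * (ε * K) * c N' + D * K * (c N' - c M) := by ring
    -- the total estimate for fixed N
    set B : ℝ := (3 + ‖L‖) * K + D * K + 2 * C' * K with hBdef
    have hB0 : 0 ≤ B := by
      rw [hBdef]
      have := mul_nonneg hD0 hK.le
      have := mul_nonneg hC'0 hK.le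
      positivity
    have hfin : ∀ N : ℕ, n₀ ≤ N →
        ‖∑ n ∈ Finset.Icc 1 N, y n‖ ≤ C' * n₀ + (3 + ‖L‖) * ε / 2 * N + B * c (N + 1) := by
      intro N hN
      obtain ⟨I, hIdef⟩ : ∃ I, I = Nat.findGreatest (fun i => a i ≤ N) N := ⟨_, rfl⟩
      have hI1 : a I ≤ N := by
        rw [hIdef]
        exact Nat.findGreatest_spec (P := fun i => a i ≤ N) (Nat.zero_le N) (show a 0 ≤ N by rw [ha0]; exact hN)
      have hgrowI := hgrow I
      have hIN : I < N := by omega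
      have hI2 : N < a (I + 1) := by
        have h2 := Nat.findGreatest_is_greatest
          (show Nat.findGreatest (fun i => a i ≤ N) N < I + 1 by rw [← hIdef]; omega) (by omega : I + 1 ≤ N)
        simp only [not_le] at h2
        exact h2
      have hcN1 : 0 ≤ c (N + 1) := (hcpos (N + 1) (by omega)).le
      have hd1 : Finset.Icc 1 N = Finset.Ioc 0 N := by ext m; simp; omega
      have hd2 : ∑ n ∈ Finset.Ioc 0 N, y n
          = ∑ n ∈ Finset.Ioc 0 n₀, y n + ∑ n ∈ Finset.Ioc n₀ (a I), y n
            + ∑ n ∈ Finset.Ioc (a I) N, y n := by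
        rw [← Finset.sum_Ioc_consecutive y (Nat.zero_le (a I)) hI1,
          ← Finset.sum_Ioc_consecutive y (Nat.zero_le n₀) (han₀ I)]
      have hd3 : ∑ n ∈ Finset.Ioc n₀ (a I), y n
          = ∑ i ∈ Finset.range I, ∑ n ∈ Finset.Ioc (a i) (a (i + 1)), y n := by
        have haux : ∀ J : ℕ, ∑ n ∈ Finset.Ioc (a 0) (a J), y n
            = ∑ i ∈ Finset.range J, ∑ n ∈ Finset.Ioc (a i) (a (i + 1)), y n := by
          intro J
          induction J with
          | zero => simp
          | succ J ih =>
              rw [Finset.sum_range_succ, ← ih,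
                Finset.sum_Ioc_consecutive y (hamono 0 J (Nat.zero_le J)) (hlt J).le]
        rw [show n₀ = a 0 from ha0.symm]
        exact haux I
      have b1 : ‖∑ n ∈ Finset.Ioc 0 n₀, y n‖ ≤ C' * n₀ := by
        refine le_trans (norm_sum_le _ _) ?_
        calc ∑ n ∈ Finset.Ioc 0 n₀, ‖y n‖ ≤ ∑ n ∈ Finset.Ioc 0 n₀, C' :=
              Finset.sum_le_sum fun n _ => hC'y n
          _ = C' * n₀ := by
              rw [Finset.sum_const, Nat.card_Ioc, nsmul_eq_mul]
              simp [mul_comm]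
      have b3 : ‖∑ n ∈ Finset.Ioc (a I) N, y n‖ ≤ C' * (2 * K * c (N + 1)) := by
        have hm : W N - W (a I) < 2 * K := by
          rcases eq_or_lt_of_le hI1 with hh | hh
          · rw [hh]; simpa using by positivity
          · exact hmin I N hh hI2
        have hN1 : 1 ≤ N := by omega
        have hcard : ((N - a I : ℕ) : ℝ) * dd W N ≤ W N - W (a I) := by
          have e := myTele W (ha1 I) hI1
          calc ((N - a I : ℕ) : ℝ) * dd W N = ∑ n ∈ Finset.Ioc (a I) N, dd W N := by
                rw [Finset.sum_const, Nat.card_Ioc, nsmul_eq_mul]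
            _ ≤ ∑ n ∈ Finset.Ioc (a I) N, dd W n := by
                refine Finset.sum_le_sum fun n hn => ?_
                obtain ⟨hn1, hn2⟩ := Finset.mem_Ioc.mp hn
                exact hWdec n N (by have := ha1 I; omega) hn2
            _ = W N - W (a I) := e
        have hdN := hddpos N hN1
        have hlenI : ((N - a I : ℕ) : ℝ) ≤ 2 * K * c N := by
          rw [hcn, ← div_eq_mul_inv, le_div_iff₀ hdN]
          linarith
        have hcNN : c N ≤ c (N + 1) := hcmono N (N + 1) hN1 (by omega)
        calc ‖∑ n ∈ Finset.Ioc (a I) N, y n‖ ≤ ∑ n ∈ Finset.Ioc (a I) N, ‖y n‖ :=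
              norm_sum_le _ _
          _ ≤ ∑ n ∈ Finset.Ioc (a I) N, C' := Finset.sum_le_sum fun n _ => hC'y n
          _ = C' * ((N - a I : ℕ) : ℝ) := by
              rw [Finset.sum_const, Nat.card_Ioc, nsmul_eq_mul]; ring
          _ ≤ C' * (2 * K * c N) := mul_le_mul_of_nonneg_left hlenI hC'0
          _ ≤ C' * (2 * K * c (N + 1)) := by
              have h2 : 2 * K * c N ≤ 2 * K * c (N + 1) :=
                mul_le_mul_of_nonneg_left hcNN (by positivity)
              exact mul_le_mul_of_nonneg_left h2 hC'0
      have s1 : ∑ i ∈ Finset.range I, (c (a (i + 1)) - c (a i + 1)) ≤ c (N + 1) := by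
        have e1 : ∀ i ∈ Finset.range I, c (a (i + 1)) - c (a i + 1)
            ≤ c (a (i + 1) + 1) - c (a i + 1) := by
          intro i _
          have := hcmono (a (i + 1)) (a (i + 1) + 1) (ha1 (i + 1)) (by omega)
          linarith
        refine le_trans (Finset.sum_le_sum e1) ?_
        rw [Finset.sum_range_sub (fun i => c (a i + 1))]
        have h1 : c (a I + 1) ≤ c (N + 1) := hcmono _ _ (by have := ha1 I; omega) (by omega)
        have h2 : 0 < c (a 0 + 1) := hcpos _ (by have := ha1 0; omega)
        linarith
      have s2 : ∑ i ∈ Finset.range I, c (a (i + 1)) ≤ (N : ℝ) / (2 * K) + c (N + 1) := by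
        rcases Nat.eq_zero_or_pos I with h0 | hpos
        · rw [h0]
          simp only [Finset.range_zero, Finset.sum_empty]
          have h1 : (0 : ℝ) ≤ (N : ℝ) / (2 * K) := by positivity
          linarith
        · obtain ⟨I', rfl⟩ : ∃ I', I = I' + 1 := ⟨I - 1, by omega⟩
          rw [Finset.sum_range_succ]
          have last : c (a (I' + 1)) ≤ c (N + 1) := hcmono _ _ (ha1 _) (by omega)
          have main : ∑ i ∈ Finset.range I', c (a (i + 1)) ≤ (N : ℝ) / (2 * K) := by
            have e1 : ∀ i ∈ Finset.range I', c (a (i + 1))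
                ≤ ((a (i + 2) : ℝ) - (a (i + 1) : ℝ)) / (2 * K) := by
              intro i _
              have h1 := hlen (i + 1)
              have h2 : c (a (i + 1)) ≤ c (a (i + 1) + 1) := hcmono _ _ (ha1 _) (by omega)
              rw [le_div_iff₀ (by positivity : (0 : ℝ) < 2 * K)]
              nlinarith
            refine le_trans (Finset.sum_le_sum e1) ?_
            have e2 : ∑ i ∈ Finset.range I', ((a (i + 2) : ℝ) - (a (i + 1) : ℝ)) / (2 * K)
                = ((a (I' + 1) : ℝ) - (a 1 : ℝ)) / (2 * K) := by
              rw [← Finset.sum_div, Finset.sum_range_sub (fun i => ((a (i + 1) : ℝ)))]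
            rw [e2]
            have h3 : (a (I' + 1) : ℝ) ≤ (N : ℝ) := by exact_mod_cast hI1
            have h4 : (0 : ℝ) ≤ (a 1 : ℝ) := Nat.cast_nonneg _
            apply div_le_div_of_nonneg_right ?_ (by positivity)
            linarith
          linarith
      have b2 : ‖∑ n ∈ Finset.Ioc n₀ (a I), y n‖
          ≤ (3 + ‖L‖) * (ε * K) * ((N : ℝ) / (2 * K) + c (N + 1)) + D * K * c (N + 1) := by
        rw [hd3]
        refine le_trans (norm_sum_le _ _) ?_
        refine le_trans (Finset.sum_le_sum fun i (_ : i ∈ Finset.range I) => hblock i) ?_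
        rw [Finset.sum_add_distrib]
        have t1 : ∑ i ∈ Finset.range I, (3 + ‖L‖) * (ε * K) * c (a (i + 1))
            ≤ (3 + ‖L‖) * (ε * K) * ((N : ℝ) / (2 * K) + c (N + 1)) := by
          rw [← Finset.mul_sum]
          exact mul_le_mul_of_nonneg_left s2 (by positivity)
        have t2 : ∑ i ∈ Finset.range I, D * K * (c (a (i + 1)) - c (a i + 1))
            ≤ D * K * c (N + 1) := by
          rw [← Finset.mul_sum]
          exact mul_le_mul_of_nonneg_left s1 (mul_nonneg hD0 hK.le)
        exact add_le_add t1 t2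
      have harith : (3 + ‖L‖) * (ε * K) * ((N : ℝ) / (2 * K) + c (N + 1)) + D * K * c (N + 1)
          + C' * (2 * K * c (N + 1))
          ≤ (3 + ‖L‖) * ε / 2 * (N : ℝ) + B * c (N + 1) := by
        have e : (3 + ‖L‖) * (ε * K) * ((N : ℝ) / (2 * K)) = (3 + ‖L‖) * ε / 2 * (N : ℝ) := by
          field_simp
        have e2 : (3 + ‖L‖) * (ε * K) * c (N + 1) ≤ (3 + ‖L‖) * K * c (N + 1) := by
          have : (3 + ‖L‖) * (ε * K) ≤ (3 + ‖L‖) * K := mul_le_mul_of_nonneg_left hεK h3L.le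
          exact mul_le_mul_of_nonneg_right this hcN1
        rw [hBdef]
        nlinarith [e, e2]
      rw [hd1, hd2]
      calc ‖∑ n ∈ Finset.Ioc 0 n₀, y n + ∑ n ∈ Finset.Ioc n₀ (a I), y n
            + ∑ n ∈ Finset.Ioc (a I) N, y n‖
          ≤ ‖∑ n ∈ Finset.Ioc 0 n₀, y n + ∑ n ∈ Finset.Ioc n₀ (a I), y n‖
            + ‖∑ n ∈ Finset.Ioc (a I) N, y n‖ := norm_add_le _ _
        _ ≤ ‖∑ n ∈ Finset.Ioc 0 n₀, y n‖ + ‖∑ n ∈ Finset.Ioc n₀ (a I), y n‖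
            + ‖∑ n ∈ Finset.Ioc (a I) N, y n‖ := by
              have := norm_add_le (∑ n ∈ Finset.Ioc 0 n₀, y n) (∑ n ∈ Finset.Ioc n₀ (a I), y n)
              linarith
        _ ≤ C' * n₀ + ((3 + ‖L‖) * (ε * K) * ((N : ℝ) / (2 * K) + c (N + 1))
            + D * K * c (N + 1)) + C' * (2 * K * c (N + 1)) := by
              exact add_le_add (add_le_add b1 b2) b3
        _ ≤ C' * n₀ + (3 + ‖L‖) * ε / 2 * N + B * c (N + 1) := by linarith [harith]
    -- limit argument
    have hlim : Tendsto (fun N : ℕ => (C' * n₀ + B * c (N + 1)) / (N : ℝ)) atTop (nhds 0) := by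
      have l1 := tendsto_const_div_atTop_nhds_zero_nat (C' * n₀)
      have l2 : Tendsto (fun N : ℕ => B * (c (N + 1) / (N : ℝ))) atTop (nhds 0) := by
        simpa using hcN.const_mul B
      have l3 := l1.add l2
      rw [add_zero] at l3
      exact l3.congr fun N => by ring
    have hev := hlim.eventually_lt_const (half_pos hε₀)
    filter_upwards [hev, eventually_ge_atTop n₀, eventually_ge_atTop 1] with N h1 h2 h3
    have hfinN := hfin N h2
    have hNpos : (0 : ℝ) < N := by exact_mod_cast h3
    rw [norm_smul, Real.norm_eq_abs, abs_of_pos (inv_pos.mpr hNpos)]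
    have step : (N : ℝ)⁻¹ * ‖∑ n ∈ Finset.Icc 1 N, y n‖
        ≤ (N : ℝ)⁻¹ * (C' * n₀ + (3 + ‖L‖) * ε / 2 * N + B * c (N + 1)) :=
      mul_le_mul_of_nonneg_left hfinN (inv_pos.mpr hNpos).le
    have e : (N : ℝ)⁻¹ * (C' * n₀ + (3 + ‖L‖) * ε / 2 * N + B * c (N + 1))
        = (C' * n₀ + B * c (N + 1)) / N + (3 + ‖L‖) * ε / 2 := by
      field_simp
      ring
    rw [e] at step
    linarith
  -- transfer back to x
  have heq : ∀ᶠ N : ℕ in atTop,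
      ((N : ℝ)⁻¹ • ∑ n ∈ Finset.Icc 1 N, y n) + L
        = (N : ℝ)⁻¹ • ∑ n ∈ Finset.Icc 1 N, x n := by
    filter_upwards [eventually_ge_atTop 1] with N hN
    have hN0 : ((N : ℝ)) ≠ 0 := by
      have : (0 : ℝ) < N := by exact_mod_cast hN
      exact this.ne'
    have hsum : ∑ n ∈ Finset.Icc 1 N, x n = ∑ n ∈ Finset.Icc 1 N, y n + (N : ℝ) • L := by
      have e1 : ∀ n ∈ Finset.Icc 1 N, x n = y n + L := fun n _ => by rw [hyn]; abel
      rw [Finset.sum_congr rfl e1, Finset.sum_add_distrib, Finset.sum_const, Nat.card_Icc]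
      congr 1
      rw [show N + 1 - 1 = N from by omega, Nat.cast_smul_eq_nsmul ℝ]
    rw [hsum, smul_add, smul_smul, inv_mul_cancel₀ hN0, one_smul]
  have hfinal := key.add (tendsto_const_nhds : Tendsto (fun _ : ℕ => L) atTop (nhds L))
  rw [zero_add] at hfinal
  exact hfinal.congr' heq
end

section
/- Let Y be a Banach space and let U : ℕ → (0,∞) be strictly increasing with limsup_{N→∞} Δ log U(N)/Δ log N = ∞ and lim_{N→∞} ΔU(N)/U(N) = 0, and such that ΔU is nondecreasing. Let s : ℕ → ℕ be a nondecreasing function with s(N) ≤ N−1 for all N ∈ ℕ and lim_{N→∞} s(N)·Δ log U(N) = ∞. Then there exists a doubly indexed sequence (c_{N,n})_{N,n∈ℕ} of nonnegative real numbers such that: (i) for each fixed n ∈ ℕ, lim_{N→∞} c_{N,n} = 0; (ii) lim_{N→∞} Σ_{n∈ℕ} c_{N,n} = 1; (iii) limsup_{N→∞} Σ_{n∈ℕ} c_{N,n} < ∞; and (iv) for every bounded sequence (x_n)_{n∈ℕ} in Y, lim_{N→∞} ‖𝔼_{n∈[N−s(N),N]} x_n − Σ_{n=1}^N c_{N,n}·𝔼^U_{k≤n}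 x_k‖ = 0. -/
open Filter Finset MeasureTheory

lemma sum_Icc_split {β : Type*} [AddCommMonoid β] (f : ℕ → β) (M n : ℕ) (hM : 1 ≤ M) (h : M ≤ n) :
    ∑ k ∈ Finset.Icc M n, f k = ∑ k ∈ Finset.Icc M (n-1), f k + f n := by
  conv_lhs => rw [show n = (n-1)+1 by omega]
  rw [Finset.sum_Icc_succ_top (by omega), show n-1+1 = n by omega]

lemma dd_sum_Icc (U : ℕ → ℝ) (m : ℕ) (hm : 1 ≤ m) :
    ∑ k ∈ Finset.Icc 1 m, dd U k = U m := by
  induction m, hm using Nat.le_induction with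
  | base => simp [dd]
  | succ n hn ih =>
    rw [Finset.sum_Icc_succ_top (by omega), ih]
    have : dd U (n+1) = U (n+1) - U n := by
      simp only [dd]; rw [if_neg (by omega)]; simp
    rw [this]; ring

lemma S_sub {Y : Type*} [AddCommGroup Y] [Module ℝ Y] (U : ℕ → ℝ) (x : ℕ → Y) (n : ℕ)
    (hn : 1 ≤ n) :
    (∑ k ∈ Finset.Icc 1 n, dd U k • x k) - (∑ k ∈ Finset.Icc 1 (n-1), dd U k • x k)
      = dd U n • x n := by
  rw [sum_Icc_split (fun k => dd U k • x k) 1 n le_rfl hn]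
  abel

lemma abel_lemma {Y : Type*} [AddCommGroup Y] [Module ℝ Y] (a : ℕ → ℝ) (S : ℕ → Y)
    (M N : ℕ) (hM : 1 ≤ M) (hMN : M ≤ N) :
    ∑ n ∈ Finset.Icc M N, a n • (S n - S (n-1)) =
      (∑ n ∈ Finset.Icc M (N-1), (a n - a (n+1)) • S n) + a N • S N - a M • S (M-1) := by
  induction N, hMN using Nat.le_induction with
  | base =>
    rw [Finset.Icc_self, Finset.sum_singleton, Finset.Icc_eq_empty (by omega)]
    simp [smul_sub]
  | succ n hn ih =>
    rw [Finset.sum_Icc_succ_top (by omega : M ≤ n + 1), ih,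
      show n + 1 - 1 = n from rfl, sum_Icc_split (fun k => (a k - a (k+1)) • S k) M n hM hn]
    simp only [sub_smul, smul_sub]
    abel

lemma telescope (U : ℕ → ℝ) (hdd : ∀ n : ℕ, 1 ≤ n → dd U n ≠ 0)
    (M N : ℕ) (hM : 1 ≤ M) (hMN : M ≤ N) :
    ∑ n ∈ Finset.Icc M (N-1), U n * ((dd U n)⁻¹ - (dd U (n+1))⁻¹) + U N / dd U N
      = U M / dd U M + ((N : ℝ) - (M : ℝ)) := by
  induction N, hMN using Nat.le_induction with
  | base =>
    rw [Finset.Icc_eq_empty (by omega)]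
    simp
  | succ n hn ih =>
    rw [show n + 1 - 1 = n from rfl, sum_Icc_split (fun k => U k * ((dd U k)⁻¹ - (dd U (k+1))⁻¹)) M n hM hn]
    have h1 : dd U (n+1) = U (n+1) - U n := by
      simp only [dd]; rw [if_neg (by omega)]; simp
    have h2 : dd U (n+1) ≠ 0 := hdd _ (by omega)
    have h3 : U (n+1) / dd U (n+1) - U n * (dd U (n+1))⁻¹ = 1 := by
      rw [div_eq_mul_inv, ← sub_mul, ← h1, mul_inv_cancel₀ h2]
    have h4 : U n * ((dd U n)⁻¹ - (dd U (n+1))⁻¹) = U n / dd U n - U n * (dd U (n+1))⁻¹ := by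
      rw [mul_sub, div_eq_mul_inv]
    push_cast
    linarith [ih, h3, h4]

lemma dd_eq (U : ℕ → ℝ) (n : ℕ) (hn : 2 ≤ n) : dd U n = U n - U (n-1) := by
  simp only [dd]; rw [if_neg (by omega)]

lemma dd_pos (U : ℕ → ℝ) (hUpos : ∀ n : ℕ, 1 ≤ n → 0 < U n)
    (hUmono : ∀ m n : ℕ, 1 ≤ m → m < n → U m < U n) (n : ℕ) (hn : 1 ≤ n) : 0 < dd U n := by
  rcases eq_or_lt_of_le hn with h | h
  · simp only [dd, ← h]; simpa using hUpos 1 le_rfl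
  · rw [dd_eq U n h]
    have := hUmono (n-1) n (by omega) (by omega)
    linarith

lemma dlog_zero (U : ℕ → ℝ) (hUpos : ∀ n : ℕ, 1 ≤ n → 0 < U n)
    (hU0 : Tendsto (fun N : ℕ => dd U N / U N) atTop (nhds 0)) :
    Tendsto (fun N : ℕ => dd (fun j => Real.log (U j)) N) atTop (nhds 0) := by
  have h1 : Tendsto (fun N : ℕ => 1 - dd U N / U N) atTop (nhds 1) := by
    simpa using (tendsto_const_nhds.sub hU0)
  have h2 : Tendsto (fun N : ℕ => -Real.log (1 - dd U N / U N)) atTop (nhds 0) := by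
    have := (Real.continuousAt_log one_ne_zero).tendsto.comp h1
    simp only [Function.comp, Real.log_one] at this
    simpa using this.neg
  refine h2.congr' ?_
  filter_upwards [eventually_ge_atTop 2] with N hN
  have hN1 : 0 < U (N-1) := hUpos _ (by omega)
  have hN0 : 0 < U N := hUpos _ (by omega)
  have e1 : 1 - dd U N / U N = U (N-1) / U N := by
    rw [dd_eq U N hN]; field_simp; ring
  rw [e1, Real.log_div hN1.ne' hN0.ne', dd_eq (fun j => Real.log (U j)) N hN]
  ring

lemma s_top (U : ℕ → ℝ) (hUpos : ∀ n : ℕ, 1 ≤ n → 0 < U n)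
    (hU0 : Tendsto (fun N : ℕ => dd U N / U N) atTop (nhds 0)) (s : ℕ → ℕ)
    (hstop : Tendsto (fun N : ℕ => (s N : ℝ) * dd (fun j => Real.log (U j)) N) atTop atTop) :
    Tendsto (fun N : ℕ => (s N : ℝ)) atTop atTop := by
  refine tendsto_atTop_mono' atTop ?_ hstop
  filter_upwards [(dlog_zero U hUpos hU0).eventually (eventually_le_nhds (by norm_num : (0:ℝ) < 1))]
    with N hN
  calc (s N : ℝ) * dd (fun j => Real.log (U j)) N ≤ (s N : ℝ) * 1 :=
        mul_le_mul_of_nonneg_left hN (Nat.cast_nonneg _)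
    _ = (s N : ℝ) := mul_one _

lemma key (U : ℕ → ℝ) (hUpos : ∀ n : ℕ, 1 ≤ n → 0 < U n)
    (hUmono : ∀ m n : ℕ, 1 ≤ m → m < n → U m < U n)
    (hU0 : Tendsto (fun N : ℕ => dd U N / U N) atTop (nhds 0))
    (s : ℕ → ℕ) (hs : Monotone s) (hs1 : ∀ N : ℕ, 1 ≤ N → s N ≤ N - 1)
    (hstop : Tendsto (fun N : ℕ => (s N : ℝ) * dd (fun j => Real.log (U j)) N) atTop atTop) :
    Tendsto (fun N : ℕ => (s N : ℝ) * (dd U (N - s N) / U (N - s N))) atTop atTop := by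
  rw [tendsto_atTop]
  intro b
  obtain ⟨m₀, hm₀⟩ := (hU0.eventually (eventually_le_nhds (by norm_num : (0:ℝ) < 1/2))).exists_forall_of_atTop
  set m₁ := max m₀ 2 with hm₁def
  have stepA : ∀ m, m₁ ≤ m → dd (fun j => Real.log (U j)) m ≤ 2 * (dd U m / U m) := by
    intro m hm
    have hm2 : 2 ≤ m := le_trans (le_max_right _ _) hm
    have hu : 0 < U m := hUpos _ (by omega)
    have hv : 0 < U (m-1) := hUpos _ (by omega)
    have hhalf : dd U m / U m ≤ 1/2 := hm₀ m (le_trans (le_max_left _ _) hm)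
    have hdd : dd U m = U m - U (m-1) := dd_eq U m hm2
    have hv2 : U m / 2 ≤ U (m-1) := by
      rw [hdd] at hhalf
      rw [div_le_div_iff₀ hu (by norm_num)] at hhalf
      linarith
    have hvu : U (m-1) < U m := hUmono (m-1) m (by omega) (by omega)
    have hlog : Real.log (U m / U (m-1)) ≤ U m / U (m-1) - 1 :=
      Real.log_le_sub_one_of_pos (div_pos hu hv)
    rw [dd_eq (fun j => Real.log (U j)) m hm2, ← Real.log_div hu.ne' hv.ne']
    have e2 : U m / U (m-1) - 1 = (U m - U (m-1)) / U (m-1) := by field_simp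
    have e3 : (U m - U (m-1)) / U (m-1) ≤ 2 * ((U m - U (m-1)) / U m) := by
      have h6 : (0:ℝ) ≤ U m - U (m-1) := by linarith
      rw [div_le_iff₀ hv]
      have h7 : 2 * ((U m - U (m-1)) / U m) * U (m-1) = 2 * (U m - U (m-1)) * U (m-1) / U m := by
        ring
      rw [h7, le_div_iff₀ hu]
      nlinarith [mul_nonneg h6 (by linarith : (0:ℝ) ≤ 2 * U (m-1) - U m)]
    rw [hdd]
    linarith
  set B := max b 1 with hBdef
  have hB1 : (1:ℝ) ≤ B := le_max_right _ _
  have hBb : b ≤ B := le_max_left _ _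
  obtain ⟨m', hm'⟩ := (hstop.eventually (eventually_ge_atTop (4*B))).exists_forall_of_atTop
  set m₂ := max m' m₁ with hm₂def
  have hm₂1 : 1 ≤ m₂ := le_trans (by omega : 1 ≤ m₁) (le_max_right _ _)
  -- δ
  have hTne : (Finset.Icc 1 m₂).Nonempty := ⟨1, by simp [hm₂1]⟩
  set T := (Finset.Icc 1 m₂).image (fun m => dd U m / U m) with hTdef
  have hTne' : T.Nonempty := hTne.image _
  set δ := T.min' hTne' with hδdef
  have hδpos : 0 < δ := by
    rw [hδdef, Finset.lt_min'_iff]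
    intro y hy
    simp only [hTdef, Finset.mem_image, Finset.mem_Icc] at hy
    obtain ⟨m, ⟨hm1, -⟩, rfl⟩ := hy
    exact div_pos (dd_pos U hUpos hUmono m hm1) (hUpos m hm1)
  rw [eventually_atTop]
  refine ⟨m₂ + Nat.ceil (B / δ) + 1, fun N hN => ?_⟩
  set M := N - s N with hMdef
  have hsN : s N ≤ N - 1 := hs1 N (by omega)
  have hM1 : 1 ≤ M := by omega
  have hMN : M ≤ N := Nat.sub_le _ _
  have hNM : N - M = s N := by omega
  have hposM : 0 < dd U M / U M := div_pos (dd_pos U hUpos hUmono M hM1) (hUpos M hM1)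
  by_cases hc : m₂ ≤ M
  · have h1 : 4*B ≤ (s M : ℝ) * dd (fun j => Real.log (U j)) M :=
      hm' M (le_trans (le_max_left _ _) hc)
    have h2 : dd (fun j => Real.log (U j)) M ≤ 2 * (dd U M / U M) :=
      stepA M (le_trans (le_max_right _ _) hc)
    have h3 : (s M : ℝ) ≤ (s N : ℝ) := by exact_mod_cast hs hMN
    have h4 : (s M : ℝ) * dd (fun j => Real.log (U j)) M ≤ (s M : ℝ) * (2 * (dd U M / U M)) :=
      mul_le_mul_of_nonneg_left h2 (Nat.cast_nonneg _)
    have h5 : (s M : ℝ) * (dd U M / U M) ≤ (s N : ℝ) * (dd U M / U M) :=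
      mul_le_mul_of_nonneg_right h3 hposM.le
    nlinarith [h1, h4, h5, hB1, hBb]
  · have hMm : M ∈ Finset.Icc 1 m₂ := by simp [Finset.mem_Icc]; omega
    have hδM : δ ≤ dd U M / U M := Finset.min'_le T _ (Finset.mem_image_of_mem _ hMm)
    have hsge : (Nat.ceil (B / δ) : ℝ) ≤ (s N : ℝ) := by
      have : Nat.ceil (B / δ) ≤ s N := by omega
      exact_mod_cast this
    have hBδ : B / δ ≤ (s N : ℝ) := le_trans (Nat.le_ceil _) hsge
    have : B ≤ (s N : ℝ) * δ := by
      rw [div_le_iff₀ hδpos] at hBδ; linarith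
    calc b ≤ B := hBb
      _ ≤ (s N : ℝ) * δ := this
      _ ≤ (s N : ℝ) * (dd U M / U M) := mul_le_mul_of_nonneg_left hδM (Nat.cast_nonneg _)

/-- existence of a Silverman–Toeplitz matrix relating the interval Cesàro
averages `𝔼_{n∈[N−s(N),N]} x_n` to the weighted averages `𝔼^U_{k≤n} x_k`. -/
theorem stmt4 (U : ℕ → ℝ)
    (hUpos : ∀ n : ℕ, 1 ≤ n → 0 < U n)
    (hUmono : ∀ m n : ℕ, 1 ≤ m → m < n → U m < U n)
    (hUfast : ∀ B : ℝ, ∃ᶠ N : ℕ in atTop,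
      B ≤ dd (fun j => Real.log (U j)) N / dd (fun j : ℕ => Real.log (j : ℝ)) N)
    (hU0 : Tendsto (fun N : ℕ => dd U N / U N) atTop (nhds 0))
    (hUdd : ∀ m n : ℕ, 1 ≤ m → m ≤ n → dd U m ≤ dd U n)
    (s : ℕ → ℕ) (hs : Monotone s) (hs1 : ∀ N : ℕ, 1 ≤ N → s N ≤ N - 1)
    (hstop : Tendsto (fun N : ℕ => (s N : ℝ) * dd (fun j => Real.log (U j)) N) atTop atTop) :
    ∃ c : ℕ → ℕ → ℝ,
      (∀ N n, 0 ≤ c N n) ∧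
      (∀ N, c N 0 = 0) ∧
      (∀ N, Summable (c N)) ∧
      (∀ n, Tendsto (fun N => c N n) atTop (nhds 0)) ∧
      Tendsto (fun N => ∑' n, c N n) atTop (nhds 1) ∧
      (∃ B : ℝ, ∀ᶠ N in atTop, (∑' n, c N n) ≤ B) ∧
      ∀ (Y : Type*) [NormedAddCommGroup Y] [NormedSpace ℝ Y] [CompleteSpace Y],
        ∀ x : ℕ → Y, (∃ C : ℝ, ∀ n, ‖x n‖ ≤ C) →
          Tendsto (fun N : ℕ =>
            ‖cesaroI x (N - s N) N - ∑ n ∈ Finset.Icc 1 N, c N n • wavg U x n‖)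
            atTop (nhds 0) := by
  have hddpos : ∀ n : ℕ, 1 ≤ n → 0 < dd U n := dd_pos U hUpos hUmono
  have hddne : ∀ n : ℕ, 1 ≤ n → dd U n ≠ 0 := fun n hn => (hddpos n hn).ne'
  have hstopR := s_top U hUpos hU0 s hstop
  have hkey := key U hUpos hUmono hU0 s hs hs1 hstop
  have hsNat : ∀ᶠ N : ℕ in atTop, 1 ≤ s N := by
    filter_upwards [hstopR.eventually_ge_atTop 1] with N hN
    exact_mod_cast hN
  -- the error quotient tends to 0
  have hq : Tendsto (fun N : ℕ => U (N - s N) / (dd U (N - s N) * (s N : ℝ)))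
      atTop (nhds 0) := by
    refine hkey.inv_tendsto_atTop.congr' ?_
    filter_upwards [hstopR.eventually_ge_atTop 1, eventually_ge_atTop 1] with N h1 h2
    have hM1 : 1 ≤ N - s N := by have := hs1 N h2; omega
    have hu : (U (N - s N)) ≠ 0 := (hUpos _ hM1).ne'
    have hd : (dd U (N - s N)) ≠ 0 := hddne _ hM1
    have hsne : (s N : ℝ) ≠ 0 := by intro h; rw [h] at h1; linarith
    field_simp
    simp only [Pi.inv_apply]; field_simp
  set c : ℕ → ℕ → ℝ := fun N n =>
    if 1 ≤ n ∧ N - s N ≤ n ∧ n ≤ N then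
      (if n = N then U N / dd U N else U n * ((dd U n)⁻¹ - (dd U (n+1))⁻¹)) / (s N : ℝ)
    else 0 with hcdef
  have hvanish : ∀ N : ℕ, ∀ n ∉ Finset.Icc 1 N, c N n = 0 := by
    intro N n hn
    rw [Finset.mem_Icc] at hn
    rw [hcdef]
    exact if_neg (by omega)
  have hnonneg : ∀ N n, 0 ≤ c N n := by
    intro N n
    rw [hcdef]
    simp only
    split_ifs with h1 h2
    · exact div_nonneg (div_nonneg (hUpos N (by omega)).le (hddpos N (by omega)).le)
        (Nat.cast_nonneg _)
    · refine div_nonneg (mul_nonneg (hUpos n h1.1).le ?_) (Nat.cast_nonneg _)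
      rw [sub_nonneg]
      exact inv_anti₀ (hddpos n h1.1) (hUdd n (n+1) h1.1 (by omega))
    · exact le_rfl
  have hsummable : ∀ N, Summable (c N) :=
    fun N => summable_of_ne_finset_zero (s := Finset.Icc 1 N) (hvanish N)
  -- value of the tsum
  have htsum : ∀ N : ℕ, 2 ≤ N → 1 ≤ s N →
      ∑' n, c N n = 1 + U (N - s N) / (dd U (N - s N) * (s N : ℝ)) := by
    intro N hN2 hsN1
    set M := N - s N with hMdef
    have hsNle : s N ≤ N - 1 := hs1 N (by omega)
    have hM1 : 1 ≤ M := by omega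
    have hMN1 : M ≤ N - 1 := by omega
    have hMN : M ≤ N := by omega
    have hsne : (s N : ℝ) ≠ 0 := Nat.cast_ne_zero.mpr (by omega)
    have hNM : (N : ℝ) - (M : ℝ) = (s N : ℝ) := by
      rw [hMdef, Nat.cast_sub (by omega : s N ≤ N)]; ring
    rw [tsum_eq_sum (hvanish N)]
    rw [← Finset.sum_subset (Finset.Icc_subset_Icc hM1 le_rfl) (by
      intro n hn1 hn2
      rw [Finset.mem_Icc] at hn1; rw [Finset.mem_Icc] at hn2
      rw [hcdef]; exact if_neg (by omega))]
    rw [sum_Icc_split (c N) M N hM1 hMN]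
    have hcN : c N N = (U N / dd U N) / (s N : ℝ) := by
      rw [hcdef]; simp only; rw [if_pos (by omega)]; norm_num
    have hcn : ∀ n ∈ Finset.Icc M (N-1), c N n =
        U n * ((dd U n)⁻¹ - (dd U (n+1))⁻¹) / (s N : ℝ) := by
      intro n hn
      rw [Finset.mem_Icc] at hn
      rw [hcdef]; simp only; rw [if_pos (by omega), if_neg (by omega)]
    rw [Finset.sum_congr rfl hcn, hcN, ← Finset.sum_div, ← add_div,
      telescope U hddne M N hM1 hMN, hNM, add_div, div_self hsne, div_div]
    ring
  have htsum1 : Tendsto (fun N => ∑' n, c N n) atTop (nhds 1) := by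
    have : Tendsto (fun N : ℕ => 1 + U (N - s N) / (dd U (N - s N) * (s N : ℝ)))
        atTop (nhds 1) := by
      simpa using tendsto_const_nhds.add hq
    refine this.congr' ?_
    filter_upwards [hsNat, eventually_ge_atTop 2] with N h1 h2
    exact (htsum N h2 h1).symm
  refine ⟨c, hnonneg, fun N => by rw [hcdef]; exact if_neg (by omega), hsummable, ?_,
    htsum1, ⟨2, ?_⟩, ?_⟩
  · -- columns tend to zero
    intro n
    rcases Nat.eq_zero_or_pos n with rfl | hn
    · refine Tendsto.congr (fun N => ?_) tendsto_const_nhds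
      rw [hcdef]; exact (if_neg (by omega)).symm
    · have hb : Tendsto (fun N : ℕ =>
          max (U n * ((dd U n)⁻¹ - (dd U (n+1))⁻¹)) 0 * ((s N : ℝ))⁻¹) atTop (nhds 0) := by
        simpa using (hstopR.inv_tendsto_atTop).const_mul
          (max (U n * ((dd U n)⁻¹ - (dd U (n+1))⁻¹)) 0)
      refine squeeze_zero' (Eventually.of_forall fun N => hnonneg N n) ?_ hb
      filter_upwards [eventually_gt_atTop n] with N h1
      rw [hcdef]
      simp only
      split_ifs with hcond heq
      · exact absurd heq (by omega)
      · rw [div_eq_mul_inv]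
        exact mul_le_mul_of_nonneg_right (le_max_left _ _)
          (inv_nonneg.mpr (Nat.cast_nonneg _))
      · exact mul_nonneg (le_max_right _ _) (inv_nonneg.mpr (Nat.cast_nonneg _))
  · -- uniform bound 2
    filter_upwards [htsum1.eventually (eventually_le_nhds (by norm_num : (1:ℝ) < 2))]
      with N hN using hN
  · -- main estimate
    rintro Y _ _ _ x ⟨C₀, hC₀⟩
    set C := max C₀ 0 with hCdef
    have hC : ∀ n, ‖x n‖ ≤ C := fun n => le_trans (hC₀ n) (le_max_left _ _)
    have hC0 : (0:ℝ) ≤ C := le_max_right _ _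
    set S : ℕ → Y := fun n => ∑ k ∈ Finset.Icc 1 n, dd U k • x k with hSdef
    have hSnorm : ∀ m : ℕ, 1 ≤ m → ‖S m‖ ≤ C * U m := by
      intro m hm
      calc ‖S m‖ ≤ ∑ k ∈ Finset.Icc 1 m, ‖dd U k • x k‖ := norm_sum_le _ _
        _ ≤ ∑ k ∈ Finset.Icc 1 m, dd U k * C := by
            refine Finset.sum_le_sum fun k hk => ?_
            rw [Finset.mem_Icc] at hk
            rw [norm_smul, Real.norm_of_nonneg (hddpos k hk.1).le]
            exact mul_le_mul_of_nonneg_left (hC k) (hddpos k hk.1).le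
        _ = (∑ k ∈ Finset.Icc 1 m, dd U k) * C := by rw [Finset.sum_mul]
        _ = C * U m := by rw [dd_sum_Icc U m hm]; ring
    have hwavg : ∀ n : ℕ, 1 ≤ n → (U n) • wavg U x n = S n := by
      intro n hn
      rw [wavg, smul_smul, mul_inv_cancel₀ (hUpos n hn).ne', one_smul]
    have hiden : ∀ N : ℕ, 2 ≤ N → 1 ≤ s N →
        cesaroI x (N - s N) N - ∑ n ∈ Finset.Icc 1 N, c N n • wavg U x n
          = -(((s N : ℝ))⁻¹ * (dd U (N - s N))⁻¹) • S (N - s N - 1) := by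
      intro N hN2 hsN1
      set M := N - s N with hMdef
      have hsNle : s N ≤ N - 1 := hs1 N (by omega)
      have hM1 : 1 ≤ M := by omega
      have hMN1 : M ≤ N - 1 := by omega
      have hMN : M ≤ N := by omega
      have hNM : (N : ℝ) - (M : ℝ) = (s N : ℝ) := by
        rw [hMdef, Nat.cast_sub (by omega : s N ≤ N)]; ring
      have E1 : cesaroI x M N = ((s N : ℝ))⁻¹ •
          ((∑ n ∈ Finset.Icc M (N-1), ((dd U n)⁻¹ - (dd U (n+1))⁻¹) • S n)
            + (dd U N)⁻¹ • S N - (dd U M)⁻¹ • S (M-1)) := by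
        rw [cesaroI, hNM]
        congr 1
        rw [← abel_lemma (fun n => (dd U n)⁻¹) S M N hM1 hMN]
        refine Finset.sum_congr rfl fun n hn => ?_
        rw [Finset.mem_Icc] at hn
        rw [hSdef]
        simp only
        rw [S_sub U x n (by omega), smul_smul, inv_mul_cancel₀ (hddne n (by omega)), one_smul]
      have E2 : ∑ n ∈ Finset.Icc 1 N, c N n • wavg U x n = ((s N : ℝ))⁻¹ •
          ((∑ n ∈ Finset.Icc M (N-1), ((dd U n)⁻¹ - (dd U (n+1))⁻¹) • S n)
            + (dd U N)⁻¹ • S N) := by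
        rw [← Finset.sum_subset (Finset.Icc_subset_Icc hM1 le_rfl) (by
          intro n hn1 hn2
          rw [Finset.mem_Icc] at hn1; rw [Finset.mem_Icc] at hn2
          rw [hcdef]; simp only; rw [if_neg (by omega), zero_smul])]
        rw [sum_Icc_split (fun n => c N n • wavg U x n) M N hM1 hMN]
        rw [smul_add, Finset.smul_sum]
        congr 1
        · refine Finset.sum_congr rfl fun n hn => ?_
          rw [Finset.mem_Icc] at hn
          have hn1 : 1 ≤ n := by omega
          rw [hcdef]; simp only; rw [if_pos (by omega), if_neg (by omega)]
          rw [← hwavg n hn1, smul_smul, smul_smul]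
          congr 1
          rw [div_eq_mul_inv]
          ring
        · rw [hcdef]; simp only; rw [if_pos (by omega)]
          norm_num
          rw [← hwavg N (by omega), smul_smul, smul_smul]
          congr 1
          rw [div_div, div_eq_mul_inv, mul_inv]
          ring
      rw [E1, E2, ← smul_sub]
      rw [show ∀ (a b c : Y), a + b - c - (a + b) = -c from fun a b c => by abel]
      rw [smul_neg, smul_smul, neg_smul]
    have hbound : Tendsto (fun N : ℕ =>
        C * (U (N - s N) / (dd U (N - s N) * (s N : ℝ)))) atTop (nhds 0) := by
      simpa using hq.const_mul C
    refine squeeze_zero' (Eventually.of_forall fun N => norm_nonneg _) ?_ hbound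
    filter_upwards [hsNat, eventually_ge_atTop 2] with N hsN1 hN2
    rw [hiden N hN2 hsN1]
    set M := N - s N with hMdef
    have hsNle : s N ≤ N - 1 := hs1 N (by omega)
    have hM1 : 1 ≤ M := by omega
    have ha : (0:ℝ) ≤ ((s N : ℝ))⁻¹ * (dd U M)⁻¹ :=
      mul_nonneg (inv_nonneg.mpr (Nat.cast_nonneg _)) (inv_nonneg.mpr (hddpos M hM1).le)
    rw [neg_smul, norm_neg, norm_smul, Real.norm_of_nonneg ha]
    have hSM : ‖S (M-1)‖ ≤ C * U M := by
      rcases eq_or_lt_of_le hM1 with h | h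
      · have : S (M-1) = 0 := by
          rw [hSdef]; simp only; rw [show M - 1 = 0 by omega]
          simp
        rw [this, norm_zero]
        exact mul_nonneg hC0 (hUpos M hM1).le
      · calc ‖S (M-1)‖ ≤ C * U (M-1) := hSnorm (M-1) (by omega)
          _ ≤ C * U M := mul_le_mul_of_nonneg_left
              (hUmono (M-1) M (by omega) (by omega)).le hC0
    calc ((s N : ℝ))⁻¹ * (dd U M)⁻¹ * ‖S (M-1)‖
        ≤ ((s N : ℝ))⁻¹ * (dd U M)⁻¹ * (C * U M) := mul_le_mul_of_nonneg_left hSM ha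
      _ = C * (U M / (dd U M * (s N : ℝ))) := by
          field_simp
end

section
/- Let x_n = e^{2πi·log n} ∈ ℂ for n ∈ ℕ, and let C = 1/(1+2πi). Then for each k ∈ ℕ the k-fold iterated Cesàro averages satisfy 𝔼(k)_{n≤N} x_n = C^k·e^{2πi·log N} + o_{N→∞}(1), and consequently 𝔼(∞) x_n = 0 (iterated averages taken with respect to W(N) = N). -/
open Filter Finset MeasureTheory

noncomputable def en (n : ℕ) : ℂ := Complex.exp (2 * (Real.pi : ℂ) * Complex.I * (Real.log n : ℂ))
noncomputable def CC : ℂ := (1 + 2 * (Real.pi : ℂ) * Complex.I)⁻¹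
noncomputable def gg (n : ℕ) : ℂ := CC * n * en n

lemma norm_en (n : ℕ) : ‖en n‖ = 1 := by
  rw [en, Complex.norm_exp]
  have : (2 * (Real.pi : ℂ) * Complex.I * (Real.log n : ℂ)).re = 0 := by
    simp [Complex.mul_re, Complex.mul_im, Complex.log_im, Complex.natCast_arg]
  rw [this, Real.exp_zero]

lemma base_ne : (1 + 2 * (Real.pi : ℂ) * Complex.I) ≠ 0 := by
  intro h
  have := congrArg Complex.im h
  simp [Complex.mul_im, Complex.mul_re] at this

lemma norm_CC_le : ‖CC‖ ≤ 1 := by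
  rw [CC, norm_inv]
  rw [inv_le_one_iff₀]
  right
  calc (1:ℝ) = |(1 + 2 * (Real.pi : ℂ) * Complex.I).re| := by
        simp [Complex.mul_re, Complex.mul_im]
    _ ≤ ‖1 + 2 * (Real.pi : ℂ) * Complex.I‖ := Complex.abs_re_le_norm _

lemma hCmul : CC * (1 + 2 * (Real.pi : ℂ) * Complex.I) = 1 := inv_mul_cancel₀ base_ne

lemma norm_gg_le (j : ℕ) : ‖gg j‖ ≤ j := by
  rw [gg]
  calc ‖CC * j * en j‖ = ‖CC‖ * ‖(j:ℂ)‖ * ‖en j‖ := by rw [norm_mul, norm_mul]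
    _ ≤ 1 * j * 1 := by
        apply mul_le_mul (mul_le_mul norm_CC_le (by simp) (norm_nonneg _) zero_le_one)
          (le_of_eq (norm_en j)) (norm_nonneg _) (by positivity)
    _ = j := by ring

lemma term_bound (n : ℕ) (hn : 1 ≤ n) : ‖en n - (gg n - gg (n-1))‖ ≤ 150 / n := by
  rcases le_or_gt n 7 with h7 | h7
  · -- crude bound
    have : ‖en n - (gg n - gg (n-1))‖ ≤ 1 + (n + (n-1 : ℕ)) := by
      calc ‖en n - (gg n - gg (n-1))‖ ≤ ‖en n‖ + ‖gg n - gg (n-1)‖ := norm_sub_le _ _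
        _ ≤ 1 + (‖gg n‖ + ‖gg (n-1)‖) := by
            rw [norm_en]
            exact add_le_add_right (norm_sub_le _ _) 1
        _ ≤ 1 + ((n:ℝ) + ((n-1:ℕ):ℝ)) := by
            have := norm_gg_le n; have := norm_gg_le (n-1); gcongr <;> assumption
    refine this.trans ?_
    have hnr : (1:ℝ) ≤ (n:ℝ) := by exact_mod_cast hn
    have h7r : (n:ℝ) ≤ 7 := by exact_mod_cast h7
    have hm : ((n-1:ℕ):ℝ) ≤ (n:ℝ) := by exact_mod_cast Nat.cast_le.2 (Nat.sub_le n 1)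
    rw [le_div_iff₀ (by positivity : (0:ℝ) < (n:ℝ))]
    nlinarith
  · -- fine analysis for n ≥ 8
    set m : ℕ := n - 1 with hm_def
    have hm7 : 7 ≤ m := by omega
    have hnm : n = m + 1 := by omega
    have hm1 : 1 ≤ m := by omega
    have hmpos : (0:ℝ) < m := by exact_mod_cast hm1
    have hnpos : (0:ℝ) < n := by positivity
    have hnm_r : (n:ℝ) = (m:ℝ) + 1 := by exact_mod_cast hnm
    set δ : ℝ := Real.log n - Real.log m with hδ_def
    have hδub : δ ≤ 1 / m := by
      have h1 : Real.log ((n:ℝ)/m) ≤ (n:ℝ)/m - 1 := Real.log_le_sub_one_of_pos (by positivity)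
      have h2 : Real.log ((n:ℝ)/m) = Real.log n - Real.log m :=
        Real.log_div (by positivity) (by positivity)
      rw [h2] at h1
      have : (n:ℝ)/m - 1 = 1/m := by field_simp [hnm_r]; linarith [hnm_r]
      linarith [this ▸ h1]
    have hδlb : 1 / n ≤ δ := by
      have h1 : Real.log ((m:ℝ)/n) ≤ (m:ℝ)/n - 1 := Real.log_le_sub_one_of_pos (by positivity)
      have h2 : Real.log ((m:ℝ)/n) = Real.log m - Real.log n :=
        Real.log_div (by positivity) (by positivity)
      rw [h2] at h1
      have : (m:ℝ)/n - 1 = -(1/n) := by field_simp [hnm_r]; linarith [hnm_r]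
      linarith [this ▸ h1]
    have hδpos : 0 < δ := lt_of_lt_of_le (by positivity) hδlb
    set w : ℂ := 2 * (Real.pi : ℂ) * Complex.I * ((Real.log m : ℂ) - (Real.log n : ℂ)) with hw_def
    have hnormw : ‖w‖ = 2 * Real.pi * δ := by
      have : w = ((2 * Real.pi : ℝ) : ℂ) * Complex.I * ((-δ : ℝ) : ℂ) := by
        rw [hw_def, hδ_def]; push_cast; ring
      rw [this, norm_mul, norm_mul, Complex.norm_real, Complex.norm_I, Complex.norm_real,
        Real.norm_eq_abs, Real.norm_eq_abs, abs_of_pos (by positivity), abs_neg,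
        abs_of_pos hδpos]; ring
    have hpi : Real.pi < 3.15 := Real.pi_lt_d2
    have hw1 : ‖w‖ ≤ 1 := by
      rw [hnormw]
      have : δ ≤ 1/7 := hδub.trans (by
        rw [div_le_div_iff₀ hmpos (by norm_num)]
        have : (7:ℝ) ≤ m := by exact_mod_cast hm7
        linarith)
      nlinarith [Real.pi_pos]
    set R : ℂ := Complex.exp w - 1 - w with hR_def
    have hnormR : ‖R‖ ≤ ‖w‖^2 := by
      rw [hR_def]
      exact Complex.norm_exp_sub_one_sub_id_le hw1
    have hexp : en m = en n * Complex.exp w := by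
      rw [en, en, ← Complex.exp_add]
      congr 1
      rw [hw_def]; ring
    have hmδ1 : (m:ℝ) * δ ≤ 1 := by
      calc (m:ℝ) * δ ≤ (m:ℝ) * (1/m) := by gcongr
        _ = 1 := by field_simp
    have hmδ2 : 1 - (m:ℝ) * δ ≤ 1/n := by
      have : (m:ℝ) * (1/n) ≤ (m:ℝ) * δ := by gcongr
      have h3 : (m:ℝ)/n = 1 - 1/n := by field_simp [hnm_r]; linarith [hnm_r]
      calc 1 - (m:ℝ)*δ ≤ 1 - (m:ℝ)*(1/n) := by linarith
        _ = 1/n := by rw [mul_one_div, h3]; ring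
    -- main identity
    have hnC : (n:ℂ) = (m:ℂ) + 1 := by exact_mod_cast hnm
    have hid : en n - (gg n - gg (n-1)) =
        en n * CC * (2 * (Real.pi : ℂ) * Complex.I * (((1 - (m:ℝ)*δ) : ℝ) : ℂ) + (m:ℂ) * R) := by
      rw [← hm_def, gg, gg, hexp, hR_def, hw_def, hδ_def]
      push_cast
      linear_combination (-(en n * CC)) * hnC - en n * hCmul
    -- norm estimate
    rw [hid, norm_mul, norm_mul, norm_en, one_mul]
    have hB : ‖2 * (Real.pi : ℂ) * Complex.I * (((1 - (m:ℝ)*δ) : ℝ) : ℂ) + (m:ℂ) * R‖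
        ≤ 2 * Real.pi * (1 - (m:ℝ)*δ) + (m:ℝ) * ‖w‖^2 := by
      calc ‖2 * (Real.pi : ℂ) * Complex.I * (((1 - (m:ℝ)*δ) : ℝ) : ℂ) + (m:ℂ) * R‖
          ≤ ‖2 * (Real.pi : ℂ) * Complex.I * (((1 - (m:ℝ)*δ) : ℝ) : ℂ)‖ + ‖(m:ℂ) * R‖ :=
            norm_add_le _ _
        _ ≤ 2 * Real.pi * (1 - (m:ℝ)*δ) + (m:ℝ) * ‖w‖^2 := by
            have e1 : ‖2 * (Real.pi : ℂ) * Complex.I * (((1 - (m:ℝ)*δ) : ℝ) : ℂ)‖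
                = 2 * Real.pi * (1 - (m:ℝ)*δ) := by
              have : 2 * (Real.pi : ℂ) * Complex.I * (((1 - (m:ℝ)*δ) : ℝ) : ℂ)
                  = ((2 * Real.pi : ℝ) : ℂ) * Complex.I * (((1 - (m:ℝ)*δ) : ℝ) : ℂ) := by
                push_cast; ring
              rw [this, norm_mul, norm_mul, Complex.norm_real, Complex.norm_I,
                Complex.norm_real, Real.norm_eq_abs, Real.norm_eq_abs,
                abs_of_pos (by positivity), abs_of_nonneg (by linarith [hmδ1])]
              ring
            have e2 : ‖(m:ℂ) * R‖ ≤ (m:ℝ) * ‖w‖^2 := by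
              rw [norm_mul, Complex.norm_natCast]
              exact mul_le_mul_of_nonneg_left hnormR (by positivity)
            linarith [e1, e2]
    have hCB : ‖CC‖ * ‖2 * (Real.pi : ℂ) * Complex.I * (((1 - (m:ℝ)*δ) : ℝ) : ℂ) + (m:ℂ) * R‖
        ≤ 2 * Real.pi * (1 - (m:ℝ)*δ) + (m:ℝ) * ‖w‖^2 := by
      calc ‖CC‖ * ‖_ + (m:ℂ) * R‖ ≤ 1 * ‖2 * (Real.pi : ℂ) * Complex.I * (((1 - (m:ℝ)*δ) : ℝ) : ℂ) + (m:ℂ) * R‖ :=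
            mul_le_mul_of_nonneg_right norm_CC_le (norm_nonneg _)
        _ ≤ 2 * Real.pi * (1 - (m:ℝ)*δ) + (m:ℝ) * ‖w‖^2 := by rw [one_mul]; exact hB
    refine hCB.trans ?_
    rw [hnormw]
    have h2m : (n:ℝ) ≤ 2 * m := by
      have : (1:ℝ) ≤ m := by exact_mod_cast hm1
      linarith [hnm_r]
    have hkey1 : 2 * Real.pi * (1 - (m:ℝ)*δ) ≤ 7 / n := by
      have : 2 * Real.pi * (1 - (m:ℝ)*δ) ≤ 7 * (1/n) := by
        apply mul_le_mul (by nlinarith) hmδ2 (by linarith [hmδ1]) (by norm_num)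
      rw [mul_one_div] at this
      linarith [this]
    have hkey2 : (m:ℝ) * (2 * Real.pi * δ)^2 ≤ 80 / n := by
      have hmd2 : (m:ℝ) * δ^2 ≤ 1/m := by
        have : (m:ℝ) * δ^2 = ((m:ℝ)*δ) * δ := by ring
        rw [this]
        calc ((m:ℝ)*δ) * δ ≤ 1 * (1/m) := by
              apply mul_le_mul hmδ1 hδub (le_of_lt hδpos) zero_le_one
          _ = 1/m := one_mul _
      have h1m : (1:ℝ)/m ≤ 2/n := by
        rw [div_le_div_iff₀ hmpos hnpos]; linarith
      have : (m:ℝ) * (2 * Real.pi * δ)^2 = 4 * Real.pi^2 * ((m:ℝ)*δ^2) := by ring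
      rw [this]
      calc 4 * Real.pi^2 * ((m:ℝ)*δ^2) ≤ 40 * (2/n) := by
            apply mul_le_mul (by nlinarith [Real.pi_pos]) (hmd2.trans h1m)
              (by positivity) (by norm_num)
        _ = 80 / n := by ring
    have : (7:ℝ)/n + 80/n ≤ 150/n := by
      rw [← add_div]
      gcongr
      · norm_num
    linarith [hkey1, hkey2, this]


lemma sum_Icc_one {E : Type*} [AddCommMonoid E] (u : ℕ → E) (N : ℕ) :
    ∑ n ∈ Icc 1 N, u n = ∑ i ∈ range N, u (i+1) := by
  rw [← Finset.Ico_add_one_right_eq_Icc, Finset.sum_Ico_eq_sum_range]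
  simp [add_comm]

lemma cesaro_Icc {E : Type*} [NormedAddCommGroup E] [NormedSpace ℝ E] (u : ℕ → E)
    (h : Tendsto u atTop (nhds 0)) :
    Tendsto (fun N : ℕ => (N:ℝ)⁻¹ • ∑ n ∈ Icc 1 N, u n) atTop (nhds 0) := by
  have h' : Tendsto (fun i : ℕ => u (i+1)) atTop (nhds 0) :=
    h.comp (tendsto_add_atTop_nat 1)
  refine h'.cesaro_smul.congr (fun N => ?_)
  rw [sum_Icc_one]

lemma telescope_s17 (N : ℕ) : ∑ n ∈ Icc 1 N, (gg n - gg (n-1)) = gg N := by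
  rw [sum_Icc_one]
  have : ∀ i : ℕ, gg (i+1) - gg (i+1-1) = gg (i+1) - gg i := by intro i; norm_num
  rw [Finset.sum_congr rfl (fun i _ => this i), Finset.sum_range_sub]
  simp [gg]

lemma key_s17 : Tendsto (fun N : ℕ => ((N:ℝ)⁻¹ • ∑ n ∈ Icc 1 N, en n) - CC * en N)
    atTop (nhds 0) := by
  rw [tendsto_zero_iff_norm_tendsto_zero]
  have hb : Tendsto (fun n : ℕ => (150:ℝ)/n) atTop (nhds 0) := by
    simpa using tendsto_const_nhds.div_atTop (tendsto_natCast_atTop_atTop (R := ℝ))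
  have hb2 := cesaro_Icc _ hb
  refine squeeze_zero' (Eventually.of_forall fun N => norm_nonneg _) ?_ hb2
  filter_upwards [Ici_mem_atTop 1] with N hN
  have hNpos : (0:ℝ) < N := by exact_mod_cast hN
  have hid : ((N:ℝ)⁻¹ • ∑ n ∈ Icc 1 N, en n) - CC * en N
      = (N:ℝ)⁻¹ • ∑ n ∈ Icc 1 N, (en n - (gg n - gg (n-1))) := by
    rw [Finset.sum_sub_distrib, telescope_s17, smul_sub]
    congr 1
    rw [gg, Complex.real_smul]
    have : ((N:ℝ):ℂ) ≠ 0 := by exact_mod_cast hNpos.ne'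
    field_simp
    rw [Complex.ofReal_div, Complex.ofReal_one, Complex.ofReal_natCast, mul_assoc,
      one_div_mul_cancel (by exact_mod_cast hNpos.ne' : ((N:ℕ):ℂ) ≠ 0), mul_one]
  rw [hid, norm_smul, Real.norm_eq_abs, abs_of_pos (by positivity)]
  calc (N:ℝ)⁻¹ * ‖∑ n ∈ Icc 1 N, (en n - (gg n - gg (n-1)))‖
      ≤ (N:ℝ)⁻¹ * ∑ n ∈ Icc 1 N, (150:ℝ)/n := by
        apply mul_le_mul_of_nonneg_left _ (by positivity)
        refine (norm_sum_le _ _).trans ?_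
        apply Finset.sum_le_sum
        intro n hn
        exact term_bound n (mem_Icc.1 hn).1
    _ = (N:ℝ)⁻¹ • ∑ n ∈ Icc 1 N, (150:ℝ)/n := by rw [smul_eq_mul]

lemma dd_W (n : ℕ) (hn : 1 ≤ n) : dd (fun m : ℕ => (m:ℝ)) n = 1 := by
  rw [dd]
  split_ifs with h
  · simp [h]
  · rw [Nat.cast_sub hn]; simp

lemma iterAvg_succ (x : ℕ → ℂ) (k N : ℕ) :
    iterAvg (fun n : ℕ => (n:ℝ)) x (k+1) N
      = (N:ℝ)⁻¹ • ∑ n ∈ Icc 1 N, iterAvg (fun n : ℕ => (n:ℝ)) x k n := by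
  rw [iterAvg]
  congr 1
  refine Finset.sum_congr rfl fun n hn => ?_
  rw [dd_W n (mem_Icc.1 hn).1, one_smul]

lemma main (k : ℕ) : Tendsto
    (fun N : ℕ => iterAvg (fun n : ℕ => (n:ℝ)) en (k+1) N - CC^(k+1) * en N)
    atTop (nhds 0) := by
  induction k with
  | zero =>
    have : ∀ N : ℕ, iterAvg (fun n : ℕ => (n:ℝ)) en 1 N - CC^1 * en N
        = ((N:ℝ)⁻¹ • ∑ n ∈ Icc 1 N, en n) - CC * en N := by
      intro N
      rw [iterAvg_succ, pow_one]
      congr 2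
    simpa only [this] using key_s17
  | succ k ih =>
    have hid : ∀ N : ℕ, iterAvg (fun n : ℕ => (n:ℝ)) en (k+2) N - CC^(k+2) * en N
        = CC^(k+1) * (((N:ℝ)⁻¹ • ∑ n ∈ Icc 1 N, en n) - CC * en N)
          + (N:ℝ)⁻¹ • ∑ n ∈ Icc 1 N,
              (iterAvg (fun n : ℕ => (n:ℝ)) en (k+1) n - CC^(k+1) * en n) := by
      intro N
      rw [iterAvg_succ]
      rw [Finset.sum_sub_distrib, ← Finset.mul_sum]
      simp only [smul_sub, Complex.real_smul, smul_eq_mul]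
      push_cast
      ring
    rw [show (0:ℂ) = CC^(k+1) * 0 + 0 by ring]
    exact (Tendsto.congr (fun N => (hid N).symm))
      ((key_s17.const_mul _).add (cesaro_Icc _ ih))

lemma norm_CC_lt : ‖CC‖ < 1 := by
  rw [CC, norm_inv]
  apply inv_lt_one_of_one_lt₀
  have h1 : ‖1 + 2 * (Real.pi : ℂ) * Complex.I‖^2
      = 1 + (2*Real.pi)^2 := by
    rw [Complex.sq_norm, Complex.normSq_apply]
    simp [Complex.mul_re, Complex.mul_im]
    ring
  nlinarith [Real.pi_pos, norm_nonneg (1 + 2 * (Real.pi : ℂ) * Complex.I)]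


/-- for `x_n = e^{2πi·log n}` and `C = 1/(1+2πi)`, the iterated Cesàro
averages satisfy `𝔼(k)_{n≤N} x_n = C^k·e^{2πi·log N} + o(1)`, and `𝔼(∞) x_n = 0`. -/
theorem stmt17 :
    (∀ k : ℕ, 1 ≤ k →
      Tendsto (fun N : ℕ =>
          ‖iterAvg (fun n : ℕ => (n : ℝ))
              (fun n : ℕ => Complex.exp (2 * (Real.pi : ℂ) * Complex.I * (Real.log n : ℂ)))
              k N
            - (1 + 2 * (Real.pi : ℂ) * Complex.I)⁻¹ ^ k
              * Complex.exp (2 * (Real.pi : ℂ) * Complex.I * (Real.log N : ℂ))‖)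
        atTop (nhds 0)) ∧
    iterInfty (fun n : ℕ => (n : ℝ))
      (fun n : ℕ => Complex.exp (2 * (Real.pi : ℂ) * Complex.I * (Real.log n : ℂ))) 0 := by
  constructor
  · intro k hk
    obtain ⟨j, rfl⟩ : ∃ j, k = j + 1 := ⟨k - 1, by omega⟩
    exact tendsto_zero_iff_norm_tendsto_zero.mp (main j)
  · rw [iterInfty]
    have hx0 : (fun n : ℕ => Complex.exp (2 * (Real.pi : ℂ) * Complex.I * (Real.log n : ℂ)) - 0)
        = en := by funext n; rw [sub_zero]; rfl
    rw [hx0]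
    have hub : ∀ k : ℕ, ∀ ε > (0:ℝ), ∀ᶠ N in atTop,
        ‖iterAvg (fun n : ℕ => (n:ℝ)) en (k+1) N‖ ≤ ‖CC‖^(k+1) + ε := by
      intro k ε hε
      have hev := (tendsto_zero_iff_norm_tendsto_zero.mp (main k)).eventually_le_const hε
      filter_upwards [hev] with N hN
      calc ‖iterAvg (fun n : ℕ => (n:ℝ)) en (k+1) N‖
          ≤ ‖CC^(k+1) * en N‖
            + ‖iterAvg (fun n : ℕ => (n:ℝ)) en (k+1) N - CC^(k+1) * en N‖ := by
            exact norm_le_insert' _ _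
        _ ≤ ‖CC‖^(k+1) + ε := by
            rw [norm_mul, norm_pow, norm_en, mul_one]
            exact add_le_add_right hN _
    have hbdd : ∀ k : ℕ, IsBoundedUnder (· ≤ ·) atTop
        (fun N => ‖iterAvg (fun n : ℕ => (n:ℝ)) en (k+1) N‖) := fun k =>
      isBoundedUnder_of_eventually_le (hub k 1 one_pos)
    have hUB : ∀ k : ℕ, limsup (fun N => ‖iterAvg (fun n : ℕ => (n:ℝ)) en (k+1) N‖) atTop
        ≤ ‖CC‖^(k+1) := by
      intro k
      apply _root_.le_of_forall_pos_le_add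
      intro ε hε
      exact Filter.limsup_le_of_le (isCoboundedUnder_le_of_le atTop fun N => norm_nonneg _)
        (hub k ε hε)
    have hLB : ∀ k : ℕ, 0 ≤ limsup (fun N => ‖iterAvg (fun n : ℕ => (n:ℝ)) en (k+1) N‖) atTop :=
      fun k => Filter.le_limsup_of_frequently_le
        ((Eventually.of_forall fun N => norm_nonneg _).frequently) (hbdd k)
    have hgeo : Tendsto (fun k : ℕ => ‖CC‖^(k+1)) atTop (nhds 0) :=
      (tendsto_pow_atTop_nhds_zero_of_lt_one (norm_nonneg _) norm_CC_lt).comp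
        (tendsto_add_atTop_nat 1)
    exact tendsto_of_tendsto_of_tendsto_of_le_of_le tendsto_const_nhds hgeo hLB hUB
end

section
/- Let V, U : ℕ → (0,∞) be strictly increasing functions with lim_{N→∞} V(N) = ∞, lim_{N→∞} U(N) = ∞, and lim_{N→∞} Δ log V(N) = 0. Suppose the limit c = lim_{N→∞} (V(N−1)/ΔU(N))·(ΔU(N)/ΔV(N) − ΔU(N−1)/ΔV(N−1)) exists in ℝ ∪ {−∞, +∞}. Then c = −1 if and only if lim_{N→∞} Δ log U(N)/Δ log V(N) = 0. -/
open Filter Finset MeasureTheory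

lemma aux_dd_zero (f : ℕ → ℝ) : dd f 0 = 0 := by simp [dd]

lemma aux_dd_one (f : ℕ → ℝ) : dd f 1 = f 1 := by simp [dd]

lemma aux_dd_of_ge (f : ℕ → ℝ) {n : ℕ} (hn : 2 ≤ n) : dd f n = f n - f (n - 1) := by
  have : n ≠ 1 := by omega
  simp [dd, this]

lemma aux_sum_dd (f : ℕ → ℝ) : ∀ n : ℕ, 1 ≤ n → ∑ i ∈ Finset.range (n + 1), dd f i = f n := by
  intro n hn
  induction n with
  | zero => omega
  | succ m ih =>
    rcases Nat.lt_or_ge m 1 with hm | hm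
    · interval_cases m
      simp [Finset.sum_range_succ, aux_dd_zero, aux_dd_one]
    · rw [Finset.sum_range_succ, ih hm, aux_dd_of_ge f (by omega)]
      simp

lemma aux_stolz (B W X : ℕ → ℝ) (c : ℝ)
    (hW1 : 0 < dd W 1) (hWpos : ∀ n, 2 ≤ n → 0 < dd W n)
    (hWtop : Tendsto W atTop atTop)
    (hB : ∀ n, 2 ≤ n → dd B n = X n * dd W n)
    (hX : Tendsto X atTop (nhds c)) :
    Tendsto (fun N => B N / W N) atTop (nhds c) := by
  set g : ℕ → ℝ := fun n => dd W n with hg_def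
  have hg : 0 ≤ g := by
    intro n
    rcases Nat.lt_or_ge n 2 with h | h
    · interval_cases n
      · simp [hg_def, aux_dd_zero]
      · exact hW1.le
    · exact (hWpos n h).le
  set f : ℕ → ℝ := fun n => dd B n - c * dd W n with hf_def
  have hfo : f =o[atTop] g := by
    rw [Asymptotics.isLittleO_iff]
    intro ε hε
    have h1 : ∀ᶠ n in atTop, |X n - c| ≤ ε := by
      filter_upwards [Metric.tendsto_nhds.mp hX ε hε] with n hn
      rw [Real.dist_eq] at hn; exact hn.le
    filter_upwards [h1, eventually_ge_atTop 2] with n hn h2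
    have : f n = (X n - c) * g n := by simp [hf_def, hg_def, hB n h2]; ring
    rw [this]
    rw [Real.norm_eq_abs, Real.norm_eq_abs, abs_mul, abs_of_nonneg (hg n)]
    exact mul_le_mul_of_nonneg_right hn (hg n)
  have hsum : Tendsto (fun n => ∑ i ∈ Finset.range n, g i) atTop atTop := by
    apply Tendsto.congr' _ (hWtop.comp (tendsto_sub_atTop_nat 1))
    filter_upwards [eventually_ge_atTop 2] with n hn
    have : n - 1 + 1 = n := by omega
    simp only [Function.comp]
    rw [← aux_sum_dd W (n - 1) (by omega), this]
  have hlo := hfo.sum_range hg hsum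
  have hsf : ∀ᶠ n : ℕ in atTop, ∑ i ∈ Finset.range n, f i = B (n-1) - c * W (n-1) := by
    filter_upwards [eventually_ge_atTop 2] with n hn
    have h1 : n - 1 + 1 = n := by omega
    simp only [hf_def, Finset.sum_sub_distrib, ← Finset.mul_sum]
    rw [← h1, aux_sum_dd B (n-1) (by omega), aux_sum_dd W (n-1) (by omega)]
    simp
  have hsg : ∀ᶠ n : ℕ in atTop, ∑ i ∈ Finset.range n, g i = W (n-1) := by
    filter_upwards [eventually_ge_atTop 2] with n hn
    have h1 : n - 1 + 1 = n := by omega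
    rw [← h1, aux_sum_dd W (n-1) (by omega)]
    simp
  have hlo2 : (fun n : ℕ => B (n-1) - c * W (n-1)) =o[atTop] (fun n : ℕ => W (n-1)) :=
    (hlo.congr' hsf hsg)
  have hW0 : ∀ᶠ n : ℕ in atTop, 0 < W (n - 1) := by
    have := (hWtop.comp (tendsto_sub_atTop_nat 1)).eventually_gt_atTop 0
    exact this
  have hdiv : Tendsto (fun n : ℕ => (B (n-1) - c * W (n-1)) / W (n-1)) atTop (nhds 0) :=
    hlo2.tendsto_div_nhds_zero
  have hdiv2 : Tendsto (fun n : ℕ => B (n-1) / W (n-1)) atTop (nhds c) := by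
    have := hdiv.add (tendsto_const_nhds (x := c))
    rw [zero_add] at this
    apply this.congr'
    filter_upwards [hW0] with n hn
    field_simp
    ring
  have := hdiv2.comp (tendsto_add_atTop_nat 1)
  simpa [Function.comp_def] using this

lemma aux_not_neg_limit (W B : ℕ → ℝ) (l : ℝ) (hW : Tendsto W atTop atTop)
    (n₁ : ℕ) (hmono : ∀ n, n₁ < n → B (n - 1) ≤ B n)
    (hlim : Tendsto (fun N => B N / W N) atTop (nhds l)) (hl : l < 0) : False := by
  have hBlow : ∀ N, n₁ ≤ N → B n₁ ≤ B N := by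
    intro N hN
    induction N, hN using Nat.le_induction with
    | base => exact le_refl _
    | succ N hN ih =>
      refine ih.trans ?_
      have := hmono (N + 1) (by omega)
      simpa using this
  have h2 : Tendsto (fun N => B n₁ / W N) atTop (nhds 0) :=
    tendsto_const_nhds.div_atTop hW
  have h3 : (0 : ℝ) ≤ l := by
    refine le_of_tendsto_of_tendsto h2 hlim ?_
    filter_upwards [hW.eventually_gt_atTop 0, eventually_ge_atTop n₁] with N hWN hN
    exact div_le_div_of_nonneg_right (hBlow N hN) hWN.le
  linarith



lemma aux_log_lb {x : ℝ} (hx : 0 < x) : x - 1 ≤ x * Real.log x := by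
  have h1 := Real.log_le_sub_one_of_pos (inv_pos.mpr hx)
  rw [Real.log_inv] at h1
  have h2 : x * x⁻¹ = 1 := mul_inv_cancel₀ hx.ne'
  nlinarith [mul_le_mul_of_nonneg_left h1 hx.le]

set_option maxHeartbeats 1000000 in
/-- if the limit `c` of `(V(N−1)/ΔU(N))·(ΔU(N)/ΔV(N) − ΔU(N−1)/ΔV(N−1))`
exists in `ℝ ∪ {±∞}`, then `c = −1` iff `lim_N Δ log U(N)/Δ log V(N) = 0`. -/
theorem stmt18 (V U : ℕ → ℝ)
    (hVpos : ∀ n : ℕ, 1 ≤ n → 0 < V n)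
    (hVmono : ∀ m n : ℕ, 1 ≤ m → m < n → V m < V n)
    (hVtop : Tendsto V atTop atTop)
    (hUpos : ∀ n : ℕ, 1 ≤ n → 0 < U n)
    (hUmono : ∀ m n : ℕ, 1 ≤ m → m < n → U m < U n)
    (hUtop : Tendsto U atTop atTop)
    (hVlog : Tendsto (fun N : ℕ => dd (fun j => Real.log (V j)) N) atTop (nhds 0))
    (c : EReal)
    (hc : Tendsto (fun N : ℕ =>
        ((V (N - 1) / dd U N *
          (dd U N / dd V N - dd U (N - 1) / dd V (N - 1)) : ℝ) : EReal))
      atTop (nhds c)) :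
    c = -1 ↔
      Tendsto (fun N : ℕ =>
          dd (fun j => Real.log (U j)) N / dd (fun j => Real.log (V j)) N)
        atTop (nhds 0) := by
  set X : ℕ → ℝ := fun N =>
    V (N - 1) / dd U N * (dd U N / dd V N - dd U (N - 1) / dd V (N - 1)) with hX_def
  -- positivity of discrete derivatives
  have hddV : ∀ n : ℕ, 1 ≤ n → 0 < dd V n := by
    intro n hn
    rcases eq_or_lt_of_le hn with h | h
    · rw [← h, aux_dd_one]; exact hVpos 1 le_rfl
    · rw [aux_dd_of_ge V (by omega)]
      have := hVmono (n - 1) n (by omega) (by omega)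
      linarith
  have hddU : ∀ n : ℕ, 1 ≤ n → 0 < dd U n := by
    intro n hn
    rcases eq_or_lt_of_le hn with h | h
    · rw [← h, aux_dd_one]; exact hUpos 1 le_rfl
    · rw [aux_dd_of_ge U (by omega)]
      have := hUmono (n - 1) n (by omega) (by omega)
      linarith
  set A : ℕ → ℝ := fun n => dd U n / dd V n * V n - U n with hA_def
  have hA : ∀ n : ℕ, 2 ≤ n → dd A n = X n * dd U n := by
    intro n hn
    have hVn : 0 < V (n - 1) := hVpos (n - 1) (by omega)
    have hUn : 0 < U (n - 1) := hUpos (n - 1) (by omega)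
    have h2 : dd U n = U n - U (n - 1) := aux_dd_of_ge U hn
    have h3 : dd V n = V n - V (n - 1) := aux_dd_of_ge V hn
    have h4 : dd V (n - 1) ≠ 0 := (hddV (n - 1) (by omega)).ne'
    have h5 : U n - U (n - 1) ≠ 0 := by rw [← h2]; exact (hddU n (by omega)).ne'
    have h6 : V n - V (n - 1) ≠ 0 := by rw [← h3]; exact (hddV n (by omega)).ne'
    rw [aux_dd_of_ge A hn]
    simp only [hA_def, hX_def, h2, h3]
    field_simp
    ring
  have hStolz : ∀ c' : ℝ, Tendsto X atTop (nhds c') →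
      Tendsto (fun N => A N / U N) atTop (nhds c') := by
    intro c' h
    exact aux_stolz A U X c' (by rw [aux_dd_one]; exact hUpos 1 le_rfl)
      (fun n hn => hddU n (by omega)) hUtop hA h
  -- basic quantities
  set q : ℕ → ℝ := fun N => V N / V (N - 1) with hq_def
  set s : ℕ → ℝ := fun N => dd U N / dd V N * V (N - 1) / U (N - 1) with hs_def
  set sp : ℕ → ℝ := fun N => dd U N / dd V N * V N / U N with hsp_def
  set τ : ℕ → ℝ := fun N => dd U N / U (N - 1) with hτ_def
  have hq1 : ∀ n : ℕ, 2 ≤ n → 1 < q n := by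
    intro n hn
    rw [hq_def, lt_div_iff₀ (hVpos (n - 1) (by omega)), one_mul]
    exact hVmono (n - 1) n (by omega) (by omega)
  have hlogV : ∀ n : ℕ, 2 ≤ n → dd (fun j => Real.log (V j)) n = Real.log (q n) := by
    intro n hn
    rw [aux_dd_of_ge _ hn, hq_def,
      Real.log_div (hVpos n (by omega)).ne' (hVpos (n - 1) (by omega)).ne']
  have hτeq : ∀ n : ℕ, 2 ≤ n → τ n = (q n - 1) * s n := by
    intro n hn
    have hVn : 0 < V (n - 1) := hVpos (n - 1) (by omega)
    have hUn : 0 < U (n - 1) := hUpos (n - 1) (by omega)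
    have h3 : dd V n = V n - V (n - 1) := aux_dd_of_ge V hn
    have h6 : V n - V (n - 1) ≠ 0 := by rw [← h3]; exact (hddV n (by omega)).ne'
    simp only [hτ_def, hs_def, hq_def, h3]
    field_simp
  have hUratio : ∀ n : ℕ, 2 ≤ n → U n / U (n - 1) = 1 + τ n := by
    intro n hn
    have hUn : 0 < U (n - 1) := hUpos (n - 1) (by omega)
    simp only [hτ_def, aux_dd_of_ge U hn]
    field_simp
    ring
  have hlogU : ∀ n : ℕ, 2 ≤ n → dd (fun j => Real.log (U j)) n = Real.log (1 + τ n) := by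
    intro n hn
    rw [aux_dd_of_ge _ hn,
      ← Real.log_div (hUpos n (by omega)).ne' (hUpos (n - 1) (by omega)).ne', hUratio n hn]
  have hτpos : ∀ n : ℕ, 2 ≤ n → 0 < τ n := fun n hn =>
    div_pos (hddU n (by omega)) (hUpos (n - 1) (by omega))
  have hspos : ∀ n : ℕ, 2 ≤ n → 0 < s n := fun n hn =>
    div_pos (mul_pos (div_pos (hddU n (by omega)) (hddV n (by omega)))
      (hVpos (n - 1) (by omega))) (hUpos (n - 1) (by omega))
  have hsppos : ∀ n : ℕ, 2 ≤ n → 0 < sp n := fun n hn =>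
    div_pos (mul_pos (div_pos (hddU n (by omega)) (hddV n (by omega)))
      (hVpos n (by omega))) (hUpos n (by omega))
  -- q → 1
  have hqT : Tendsto q atTop (nhds 1) := by
    have h1 : Tendsto (fun n : ℕ => Real.exp (dd (fun j => Real.log (V j)) n)) atTop
        (nhds 1) := by
      have := (Real.continuous_exp.tendsto 0).comp hVlog
      simpa [Function.comp_def] using this
    apply h1.congr'
    filter_upwards [eventually_ge_atTop 2] with n hn
    rw [hlogV n hn, Real.exp_log (div_pos (hVpos n (by omega)) (hVpos (n - 1) (by omega)))]
  -- A/U → -1 ↔ sp → 0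
  have hAUsp : Tendsto (fun N => A N / U N) atTop (nhds (-1)) ↔
      Tendsto sp atTop (nhds 0) := by
    have hpt : ∀ᶠ n : ℕ in atTop, A n / U n = sp n - 1 := by
      filter_upwards [eventually_ge_atTop 2] with n hn
      have hUn : U n ≠ 0 := (hUpos n (by omega)).ne'
      have hdV : dd V n ≠ 0 := (hddV n (by omega)).ne'
      simp only [hA_def, hsp_def]
      field_simp
    constructor
    · intro h
      have := h.add (tendsto_const_nhds (x := (1 : ℝ)))
      norm_num at this
      apply this.congr'
      filter_upwards [hpt] with n hn
      rw [hn]; ring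
    · intro h
      have := h.sub (tendsto_const_nhds (x := (1 : ℝ)))
      norm_num at this
      apply this.congr'
      filter_upwards [hpt] with n hn
      rw [hn]
  -- s → 0 → sp → 0
  have hτ_of_s : Tendsto s atTop (nhds 0) → Tendsto τ atTop (nhds 0) := by
    intro hs
    have h1 : Tendsto (fun n => (q n - 1) * s n) atTop (nhds 0) := by
      have := (hqT.sub_const 1).mul hs
      simpa using this
    apply h1.congr'
    filter_upwards [eventually_ge_atTop 2] with n hn
    rw [hτeq n hn]
  have hsp_of_s : Tendsto s atTop (nhds 0) → Tendsto sp atTop (nhds 0) := by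
    intro hs
    have hτ0 := hτ_of_s hs
    have h1 : Tendsto (fun n => s n * q n / (1 + τ n)) atTop (nhds 0) := by
      have := (hs.mul hqT).div ((hτ0.const_add 1)) (by norm_num)
      simpa [Pi.div_def] using this
    apply h1.congr'
    filter_upwards [eventually_ge_atTop 2] with n hn
    have hUn : 0 < U (n - 1) := hUpos (n - 1) (by omega)
    have hUnn : 0 < U n := hUpos n (by omega)
    have hVn : 0 < V (n - 1) := hVpos (n - 1) (by omega)
    rw [← hUratio n hn]
    simp only [hsp_def, hs_def, hq_def]
    field_simp [hUn.ne', hUnn.ne', hVn.ne', (hddV n (by omega)).ne']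
  -- sp → 0 → s → 0
  have hs_of_sp : Tendsto sp atTop (nhds 0) → Tendsto s atTop (nhds 0) := by
    intro hsp
    have hkey : ∀ n : ℕ, 2 ≤ n → s n * (q n - sp n * (q n - 1)) = sp n := by
      intro n hn
      have hVn : 0 < V (n - 1) := hVpos (n - 1) (by omega)
      have hUn : 0 < U (n - 1) := hUpos (n - 1) (by omega)
      have hUnn : 0 < U n := hUpos n (by omega)
      have h2 : dd U n = U n - U (n - 1) := aux_dd_of_ge U hn
      have h3 : dd V n = V n - V (n - 1) := aux_dd_of_ge V hn
      have h6 : V n - V (n - 1) ≠ 0 := by rw [← h3]; exact (hddV n (by omega)).ne'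
      simp only [hs_def, hsp_def, hq_def, h2, h3]
      field_simp
      ring
    have hd : Tendsto (fun n => q n - sp n * (q n - 1)) atTop (nhds 1) := by
      have := hqT.sub (hsp.mul (hqT.sub_const 1))
      simpa using this
    have h1 : Tendsto (fun n => sp n / (q n - sp n * (q n - 1))) atTop (nhds 0) := by
      have := hsp.div hd one_ne_zero
      simpa [Pi.div_def] using this
    apply h1.congr'
    filter_upwards [eventually_ge_atTop 2] with n hn
    have hdn : q n - sp n * (q n - 1) ≠ 0 := by
      intro h0
      have := hkey n hn
      rw [h0, mul_zero] at this
      exact (hsppos n hn).ne this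
    rw [div_eq_iff hdn]
    exact (hkey n hn).symm
  -- the RHS function
  set r : ℕ → ℝ := fun N =>
    dd (fun j => Real.log (U j)) N / dd (fun j => Real.log (V j)) N with hr_def
  -- s → 0 → r → 0
  have hr_of_s : Tendsto s atTop (nhds 0) → Tendsto r atTop (nhds 0) := by
    intro hs
    have hup : Tendsto (fun n => s n * q n) atTop (nhds 0) := by
      have := hs.mul hqT
      simpa using this
    refine tendsto_of_tendsto_of_tendsto_of_le_of_le' tendsto_const_nhds hup ?_ ?_
    · filter_upwards [eventually_ge_atTop 2] with n hn
      rw [hr_def]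
      simp only
      rw [hlogU n hn, hlogV n hn]
      have h1 : (0:ℝ) ≤ Real.log (1 + τ n) := Real.log_nonneg (by linarith [hτpos n hn])
      have h2 : 0 < Real.log (q n) := Real.log_pos (hq1 n hn)
      positivity
    · filter_upwards [eventually_ge_atTop 2] with n hn
      rw [hr_def]
      simp only
      rw [hlogU n hn, hlogV n hn]
      have h2 : 0 < Real.log (q n) := Real.log_pos (hq1 n hn)
      rw [div_le_iff₀ h2]
      have h3 : Real.log (1 + τ n) ≤ τ n := by
        have := Real.log_le_sub_one_of_pos (show (0:ℝ) < 1 + τ n by linarith [hτpos n hn])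
        linarith
      have h4 : q n - 1 ≤ q n * Real.log (q n) :=
        aux_log_lb (by linarith [hq1 n hn])
      have h5 : τ n = (q n - 1) * s n := hτeq n hn
      nlinarith [hspos n hn, (hspos n hn).le, hq1 n hn]
  -- r → 0 → s → 0
  have hs_of_r : Tendsto r atTop (nhds 0) → Tendsto s atTop (nhds 0) := by
    intro hr
    have hlogU0 : Tendsto (fun n => dd (fun j => Real.log (U j)) n) atTop (nhds 0) := by
      have h1 : Tendsto (fun n => r n * dd (fun j => Real.log (V j)) n) atTop (nhds 0) := by
        have := hr.mul hVlog
        simpa using this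
      apply h1.congr'
      filter_upwards [eventually_ge_atTop 2] with n hn
      rw [hr_def]
      simp only
      rw [div_mul_cancel₀]
      rw [hlogV n hn]
      exact (Real.log_pos (hq1 n hn)).ne'
    have hτ0 : Tendsto τ atTop (nhds 0) := by
      have h1 : Tendsto (fun n : ℕ =>
          Real.exp (dd (fun j => Real.log (U j)) n) - 1) atTop (nhds 0) := by
        have := ((Real.continuous_exp.tendsto 0).comp hlogU0).sub_const 1
        simpa using this
      apply h1.congr'
      filter_upwards [eventually_ge_atTop 2] with n hn
      rw [hlogU n hn, Real.exp_log (by linarith [hτpos n hn])]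
      ring
    have hup : Tendsto (fun n => (1 + τ n) * r n) atTop (nhds 0) := by
      have := (hτ0.const_add 1).mul hr
      simpa using this
    refine tendsto_of_tendsto_of_tendsto_of_le_of_le' tendsto_const_nhds hup ?_ ?_
    · filter_upwards [eventually_ge_atTop 2] with n hn
      exact (hspos n hn).le
    · filter_upwards [eventually_ge_atTop 2] with n hn
      have hq := hq1 n hn
      have hτp := hτpos n hn
      have hsn := hspos n hn
      have hrn : 0 ≤ r n := by
        rw [hr_def]
        simp only
        rw [hlogU n hn, hlogV n hn]
        exact div_nonneg (Real.log_nonneg (by linarith)) (Real.log_pos hq).le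
      have h3 : τ n ≤ (1 + τ n) * Real.log (1 + τ n) := by
        have := aux_log_lb (show (0:ℝ) < 1 + τ n by linarith)
        linarith
      have h4 : Real.log (q n) ≤ q n - 1 :=  by
        have := Real.log_le_sub_one_of_pos (show (0:ℝ) < q n by linarith)
        linarith
      have h5 : Real.log (1 + τ n) = r n * Real.log (q n) := by
        rw [hr_def]
        simp only
        rw [hlogU n hn, hlogV n hn, div_mul_cancel₀]
        exact (Real.log_pos hq).ne'
      have h6 : τ n = (q n - 1) * s n := hτeq n hn
      -- τ ≤ (1+τ) r (q-1) ; τ = (q-1) s ⇒ s ≤ (1+τ) r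
      have h7 : (q n - 1) * s n ≤ (1 + τ n) * (r n * (q n - 1)) := by
        calc (q n - 1) * s n = τ n := h6.symm
          _ ≤ (1 + τ n) * Real.log (1 + τ n) := h3
          _ = (1 + τ n) * (r n * Real.log (q n)) := by rw [h5]
          _ ≤ (1 + τ n) * (r n * (q n - 1)) := by
              apply mul_le_mul_of_nonneg_left _ (by linarith)
              exact mul_le_mul_of_nonneg_left h4 hrn
      have h8 : 0 < q n - 1 := by linarith
      nlinarith
  -- final assembly
  constructor
  · intro hceq
    rw [hceq] at hc
    have hcoe : ((-1 : ℝ) : EReal) = -1 := by norm_num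
    rw [← hcoe] at hc
    have hX1 : Tendsto X atTop (nhds (-1)) := EReal.tendsto_coe.mp hc
    exact hr_of_s (hs_of_sp (hAUsp.mp (hStolz (-1) hX1)))
  · intro hr
    have hAU : Tendsto (fun N => A N / U N) atTop (nhds (-1)) :=
      hAUsp.mpr (hsp_of_s (hs_of_r hr))
    induction c using EReal.rec with
    | coe a =>
      have hX1 : Tendsto X atTop (nhds a) := EReal.tendsto_coe.mp hc
      have := tendsto_nhds_unique (hStolz a hX1) hAU
      rw [this]
      norm_num
    | top =>
      exfalso
      have hev : ∀ᶠ N in atTop, ((0:ℝ) : EReal) < ((X N : ℝ) : EReal) :=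
        EReal.tendsto_nhds_top_iff_real.mp hc 0
      have hev2 : ∀ᶠ N in atTop, 0 ≤ X N := by
        filter_upwards [hev] with N hN
        exact (EReal.coe_lt_coe_iff.mp hN).le
      rw [eventually_atTop] at hev2
      obtain ⟨n₀, hn₀⟩ := hev2
      refine aux_not_neg_limit U A (-1) hUtop (max n₀ 2) ?_ hAU (by norm_num)
      intro n hn
      have h1 : dd A n = X n * dd U n := hA n (by omega)
      rw [aux_dd_of_ge A (by omega)] at h1
      nlinarith [hn₀ n (by omega), (hddU n (by omega)).le,
        mul_nonneg (hn₀ n (by omega)) (hddU n (by omega)).le]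
    | bot =>
      exfalso
      have hev : ∀ᶠ N in atTop, ((X N : ℝ) : EReal) < ((-2:ℝ) : EReal) :=
        EReal.tendsto_nhds_bot_iff_real.mp hc (-2)
      have hev2 : ∀ᶠ N in atTop, X N ≤ -2 := by
        filter_upwards [hev] with N hN
        exact (EReal.coe_lt_coe_iff.mp hN).le
      rw [eventually_atTop] at hev2
      obtain ⟨n₀, hn₀⟩ := hev2
      set B : ℕ → ℝ := fun n => -A n - 2 * U n with hB_def
      have hlimB : Tendsto (fun N => B N / U N) atTop (nhds (-1)) := by
        have h1 : Tendsto (fun N => -(A N / U N) - 2) atTop (nhds (-1)) := by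
          have := (hAU.neg).sub_const 2
          norm_num at this
          exact this
        apply h1.congr'
        filter_upwards [hUtop.eventually_gt_atTop 0] with n hUn
        rw [hB_def]
        simp only
        field_simp
      refine aux_not_neg_limit U B (-1) hUtop (max n₀ 2) ?_ hlimB (by norm_num)
      intro n hn
      have h1 : dd A n = X n * dd U n := hA n (by omega)
      rw [aux_dd_of_ge A (by omega)] at h1
      have h2 : dd U n = U n - U (n - 1) := aux_dd_of_ge U (by omega)
      rw [hB_def]
      simp only
      have h3 := hn₀ n (by omega)
      have h4 := (hddU n (by omega)).le
      nlinarith [mul_le_mul_of_nonneg_right h3 h4]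
end
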